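/- arXiv:1811.03357 — 7 statements merged into one kernel-verified Lean document; each statement's English description precedes it below -/
import Mathlib

section
/- Let 𝒜 and 𝒜' be ordered point configurations of n points in ℤ^d (n ≥ d+1) with the same volume vector (w_{i₁,…,i_{d+1}}). If gcd over all (d+1)-subsets of the entries w_{i₁,…,i_{d+1}} equals 1, then there is an affine map t(x) = Mx + b with M ∈ GL_d(ℤ) and b ∈ ℤ^d mapping p_j to p'_j for all j. -/
/-- The entry of the volume vector of an ordered point configuration `p` in `ℤ^d`
corresponding to a selection `s` of `d+1` indices: the determinant of the matrix
whose columns are `(1, p (s c))`. -/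
def volVecEntry {d n : ℕ} (p : Fin n → Fin d → ℤ) (s : Fin (d + 1) → Fin n) : ℤ :=
  Matrix.det (Matrix.of fun r c : Fin (d + 1) =>
    Fin.cases (motive := fun _ => ℤ) 1 (fun r' => p (s c) r') r)

open Matrix

namespace Stmt2Aux
open Matrix

variable {d n : ℕ}

/-- The lifted point `(1, p j)`. -/
def colP (p : Fin n → Fin d → ℤ) (j : Fin n) : Fin (d + 1) → ℤ := Fin.cons 1 (p j)

/-- The matrix whose columns are the lifted selected points. -/
def Amat (p : Fin n → Fin d → ℤ) (s : Fin (d + 1) → Fin n) :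
    Matrix (Fin (d + 1)) (Fin (d + 1)) ℤ :=
  Matrix.of fun r c => colP p (s c) r

lemma volVecEntry_eq_det (p : Fin n → Fin d → ℤ) (s : Fin (d + 1) → Fin n) :
    volVecEntry p s = (Amat p s).det := rfl

lemma Amat_comp (p : Fin n → Fin d → ℤ) (s : Fin (d + 1) → Fin n)
    (σ : Equiv.Perm (Fin (d + 1))) :
    Amat p (s ∘ σ) = (Amat p s).submatrix id σ := rfl

lemma updateColumn_Amat (p : Fin n → Fin d → ℤ) (s : Fin (d + 1) → Fin n)
    (i : Fin (d + 1)) (j : Fin n) :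
    (Amat p s).updateCol i (colP p j) = Amat p (Function.update s i j) := by
  ext r c
  by_cases h : c = i <;>
    simp [Amat, Matrix.updateCol_apply, Function.update, h]

section All
variable {p q : Fin n → Fin d → ℤ}

/-- Equality of volume vectors on strictly monotone selections extends to all selections. -/
lemma volVecEntry_eq_all
    (hW : ∀ s : Fin (d + 1) → Fin n, StrictMono s → volVecEntry p s = volVecEntry q s)
    (s : Fin (d + 1) → Fin n) : volVecEntry p s = volVecEntry q s := by
  by_cases hs : Function.Injective s
  · set σ := Tuple.sort s with hσ
    have hmono : Monotone (s ∘ σ) := Tuple.monotone_sort s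
    have hsm : StrictMono (s ∘ σ) :=
      hmono.strictMono_of_injective (hs.comp σ.injective)
    have h1 := hW _ hsm
    rw [volVecEntry_eq_det, volVecEntry_eq_det, Amat_comp, Amat_comp,
      Matrix.det_permute', Matrix.det_permute'] at h1
    have hu : (Equiv.Perm.sign σ : ℤ) ≠ 0 := by
      rcases Int.units_eq_one_or (Equiv.Perm.sign σ) with h | h <;> simp [h]
    rw [volVecEntry_eq_det, volVecEntry_eq_det]
    exact mul_left_cancel₀ hu h1
  · simp only [Function.Injective, not_forall] at hs
    obtain ⟨i, j, hij, hne⟩ := hs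
    rw [volVecEntry_eq_det, volVecEntry_eq_det,
      Matrix.det_zero_of_column_eq hne (fun k => by simp [Amat, hij]),
      Matrix.det_zero_of_column_eq hne (fun k => by simp [Amat, hij])]

/-- Cramer transfer: the cramer vectors agree. -/
lemma cramer_transfer
    (hW : ∀ s : Fin (d + 1) → Fin n, StrictMono s → volVecEntry p s = volVecEntry q s)
    (s : Fin (d + 1) → Fin n) (j : Fin n) :
    (Amat p s).cramer (colP p j) = (Amat q s).cramer (colP q j) := by
  funext i
  rw [Matrix.cramer_apply, Matrix.cramer_apply, updateColumn_Amat, updateColumn_Amat,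
    ← volVecEntry_eq_det, ← volVecEntry_eq_det]
  exact volVecEntry_eq_all hW _

end All

section Main
variable {p q : Fin n → Fin d → ℤ}

/-- The matrix whose columns are the lifted points. -/
def Pmat (p : Fin n → Fin d → ℤ) : Matrix (Fin (d + 1)) (Fin n) ℤ :=
  Matrix.of fun r j => colP p j r

/-- Selection matrix. -/
def iota (s : Fin (d + 1) → Fin n) : Matrix (Fin n) (Fin (d + 1)) ℤ :=
  Matrix.of fun k c => if k = s c then 1 else 0

lemma Pmat_mul_iota (p : Fin n → Fin d → ℤ) (s : Fin (d + 1) → Fin n) :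
    Pmat p * iota s = Amat p s := by
  ext r c
  simp [Pmat, iota, Amat, Matrix.mul_apply, mul_ite, mul_one, mul_zero]

lemma key_mulVec
    (hW : ∀ s : Fin (d + 1) → Fin n, StrictMono s → volVecEntry p s = volVecEntry q s)
    (s : Fin (d + 1) → Fin n) (j : Fin n) :
    (Amat q s * (Amat p s).adjugate) *ᵥ colP p j = volVecEntry p s • colP q j := by
  rw [← Matrix.mulVec_mulVec, ← Matrix.cramer_eq_adjugate_mulVec, cramer_transfer hW,
    Matrix.mulVec_cramer, ← volVecEntry_eq_det, ← volVecEntry_eq_all hW]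

lemma key_mul
    (hW : ∀ s : Fin (d + 1) → Fin n, StrictMono s → volVecEntry p s = volVecEntry q s)
    (s : Fin (d + 1) → Fin n) :
    (Amat q s * (Amat p s).adjugate) * Pmat p = volVecEntry p s • Pmat q := by
  ext r j
  have h := congrFun (key_mulVec hW s j) r
  simpa [Matrix.mul_apply, Matrix.mulVec, dotProduct, Pmat, Matrix.smul_apply] using h

end Main
end Stmt2Aux

open Stmt2Aux in
/-- If two ordered configurations of `n ≥ d+1` points in `ℤ^d` have the same volume
vector, and the gcd of all the entries of the volume vector is `1`, then there is a
unimodular affine map `x ↦ Mx + b` (with `M ∈ GL_d(ℤ)`, `b ∈ ℤ^d`) sending one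
configuration to the other, respecting the order of points. -/
theorem stmt2 (d n : ℕ) (hn : d + 1 ≤ n) (p q : Fin n → Fin d → ℤ)
    (hW : ∀ s : Fin (d + 1) → Fin n, StrictMono s → volVecEntry p s = volVecEntry q s)
    (hgcd : ∀ k : ℤ, (∀ s : Fin (d + 1) → Fin n, StrictMono s → k ∣ volVecEntry p s) →
      IsUnit k) :
    ∃ (M : Matrix (Fin d) (Fin d) ℤ) (b : Fin d → ℤ),
      IsUnit M.det ∧ ∀ j : Fin n, M.mulVec (p j) + b = q j := by
  classical
  -- Bezout coefficients
  obtain ⟨c, hc⟩ : ∃ c : (Fin (d + 1) → Fin n) → ℤ,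
      ∑ s : Fin (d + 1) → Fin n, c s * volVecEntry p s = 1 := by
    rw [← Ideal.mem_span_range_iff_exists_fun]
    set I : Ideal ℤ := Ideal.span (Set.range (volVecEntry p)) with hI
    obtain ⟨g, hg⟩ := Submodule.IsPrincipal.principal I
    have hdvd : ∀ s : Fin (d + 1) → Fin n, StrictMono s → g ∣ volVecEntry p s := by
      intro s hs
      have hmem : volVecEntry p s ∈ I := Ideal.subset_span ⟨s, rfl⟩
      rw [hg] at hmem
      exact Ideal.mem_span_singleton.1 hmem
    have hu : IsUnit g := hgcd g hdvd
    have htop : I = ⊤ := by rw [hg]; exact Ideal.span_singleton_eq_top.2 hu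
    rw [htop]; trivial
  have hW' : ∀ s : Fin (d + 1) → Fin n, StrictMono s → volVecEntry q s = volVecEntry p s :=
    fun s hs => (hW s hs).symm
  have hc' : ∑ s : Fin (d + 1) → Fin n, c s * volVecEntry q s = 1 := by
    rw [← hc]; exact Finset.sum_congr rfl fun s _ => by rw [volVecEntry_eq_all hW]
  set U : Matrix (Fin (d + 1)) (Fin (d + 1)) ℤ :=
    ∑ s : Fin (d + 1) → Fin n, c s • (Amat q s * (Amat p s).adjugate) with hU
  set V : Matrix (Fin (d + 1)) (Fin (d + 1)) ℤ :=
    ∑ s : Fin (d + 1) → Fin n, c s • (Amat p s * (Amat q s).adjugate) with hV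
  set R : Matrix (Fin n) (Fin (d + 1)) ℤ :=
    ∑ s : Fin (d + 1) → Fin n, c s • (iota s * (Amat p s).adjugate) with hR
  have hUP : U * Pmat p = Pmat q := by
    rw [hU, Matrix.sum_mul]
    simp_rw [Matrix.smul_mul, key_mul hW, smul_smul, ← Finset.sum_smul, hc, one_smul]
  have hVQ : V * Pmat q = Pmat p := by
    rw [hV, Matrix.sum_mul]
    simp_rw [Matrix.smul_mul, key_mul hW', smul_smul]
    rw [← Finset.sum_smul, hc', one_smul]
  have hPR : Pmat p * R = 1 := by
    rw [hR, Matrix.mul_sum]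
    simp_rw [Matrix.mul_smul, ← Matrix.mul_assoc, Pmat_mul_iota, Matrix.mul_adjugate,
      ← volVecEntry_eq_det, smul_smul, ← Finset.sum_smul, hc, one_smul]
  have hVU : V * U = 1 := by
    have h1 : V * U * Pmat p = Pmat p := by rw [Matrix.mul_assoc, hUP, hVQ]
    calc V * U = V * U * (Pmat p * R) := by rw [hPR, Matrix.mul_one]
      _ = V * U * Pmat p * R := by rw [Matrix.mul_assoc (V * U)]
      _ = Pmat p * R := by rw [h1]
      _ = 1 := hPR
  have hUdet : IsUnit U.det := by
    have h := congrArg Matrix.det hVU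
    rw [Matrix.det_mul, Matrix.det_one] at h
    exact IsUnit.of_mul_eq_one _ ((mul_comm V.det U.det) ▸ h)
  -- row zero of U is e₀
  have hU0 : U 0 = Pi.single 0 1 := by
    set u : Fin (d + 1) → ℤ := fun k => U 0 k - (Pi.single 0 1 : Fin (d + 1) → ℤ) k with hu
    have h3 : u ᵥ* Pmat p = 0 := by
      funext j
      have h1 : ∑ k, U 0 k * Pmat p k j = 1 := by
        have := congrFun (congrFun hUP 0) j
        simpa [Matrix.mul_apply, Pmat, colP] using this
      have h2 : ∑ k, (Pi.single 0 1 : Fin (d + 1) → ℤ) k * Pmat p k j = 1 := by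
        simp [Pi.single_apply, ite_mul, one_mul, zero_mul, Pmat, colP]
      simp only [Matrix.vecMul, dotProduct, hu, sub_mul, Finset.sum_sub_distrib,
        h1, h2, sub_self, Pi.zero_apply]
    have h4 : u = 0 := by
      have h5 := congrArg (fun w => w ᵥ* R) h3
      simpa [Matrix.vecMul_vecMul, hPR, Matrix.vecMul_one, Matrix.zero_vecMul] using h5
    funext k
    have := congrFun h4 k
    simp only [hu, Pi.zero_apply, sub_eq_zero] at this
    exact this
  refine ⟨Matrix.of fun i j => U i.succ j.succ, fun i => U i.succ 0, ?_, ?_⟩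
  · have hdet : U.det = (Matrix.of fun i j : Fin d => U i.succ j.succ).det := by
      rw [Matrix.det_succ_row_zero, Finset.sum_eq_single 0]
      · simp only [hU0, Fin.val_zero, pow_zero, one_mul, Pi.single_eq_same,
          Fin.succAbove_zero]
        rfl
      · intro j _ hj
        simp [hU0, Pi.single_apply, hj]
      · simp
    exact hdet ▸ hUdet
  · intro j
    have hmv : U *ᵥ colP p j = colP q j := by
      funext r
      have := congrFun (congrFun hUP r) j
      simpa [Matrix.mul_apply, Matrix.mulVec, dotProduct, Pmat] using this
    funext i
    have h := congrFun hmv i.succ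
    simp only [Matrix.mulVec, dotProduct, Fin.sum_univ_succ, colP, Fin.cons_zero,
      Fin.cons_succ, mul_one] at h
    simp only [Pi.add_apply, Matrix.mulVec, dotProduct, Matrix.of_apply]
    rw [add_comm]
    exact h
end

section
/- Up to unimodular equivalence, there are finitely many d-dimensional lattice simplices with normalized volume at most K, for any fixed positive integers d and K. -/
open MeasureTheory

/-- Coercion of an integer point to a real point. -/
noncomputable def toR {d : ℕ} (x : Fin d → ℤ) : Fin d → ℝ := fun i => (x i : ℝ)


open Matrix

namespace Stmt3Aux

variable {d : ℕ}

/-- Signed row swap: row r ← row s, row s ← -row r. -/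
noncomputable def swapSign (r s : Fin d) : Matrix (Fin d) (Fin d) ℤ :=
  transvection r s 1 * transvection s r (-1) * transvection r s 1

lemma swapSign_mul (r s : Fin d) (hrs : r ≠ s) (A : Matrix (Fin d) (Fin d) ℤ) :
    (swapSign r s * A) r = A s ∧ (swapSign r s * A) s = -A r ∧
      ∀ i, i ≠ r → i ≠ s → (swapSign r s * A) i = A i := by
  have h1 : swapSign r s * A
      = transvection r s 1 * (transvection s r (-1) * (transvection r s 1 * A)) := by
    simp [swapSign, Matrix.mul_assoc]
  refine ⟨?_, ?_, ?_⟩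
  · funext c
    rw [h1]
    simp [transvection_mul_apply_same, transvection_mul_apply_of_ne, hrs, hrs.symm]
  · funext c
    rw [h1]
    simp [transvection_mul_apply_same, transvection_mul_apply_of_ne, hrs, hrs.symm]
  · intro i hir his
    funext c
    rw [h1]
    simp [transvection_mul_apply_of_ne, hir, his]

lemma det_swapSign (r s : Fin d) (hrs : r ≠ s) : IsUnit (swapSign r s).det := by
  simp [swapSign, det_mul, det_transvection_of_ne _ _ hrs, det_transvection_of_ne _ _ hrs.symm]

lemma clear_entry (r s c : Fin d) (hrs : r ≠ s) :
    ∀ (n : ℕ) (A : Matrix (Fin d) (Fin d) ℤ), (A s c).natAbs ≤ n →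
    ∃ M : Matrix (Fin d) (Fin d) ℤ, IsUnit M.det ∧
      (∀ i, i ≠ r → i ≠ s → (M * A) i = A i) ∧
      (∀ c', A r c' = 0 → A s c' = 0 → (M * A) r c' = 0 ∧ (M * A) s c' = 0) ∧
      (M * A) s c = 0 := by
  intro n
  induction n with
  | zero =>
    intro A hA
    refine ⟨1, by simp, by simp, by simp +contextual, ?_⟩
    have : A s c = 0 := by omega
    simpa using this
  | succ n IH =>
    intro A hA
    by_cases h0 : A s c = 0
    · exact ⟨1, by simp, by simp, by simp +contextual, by simpa using h0⟩
    · set q : ℤ := A r c / A s c with hq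
      set B : Matrix (Fin d) (Fin d) ℤ := transvection r s (-q) * A with hB
      have hBr : ∀ c', B r c' = A r c' - q * A s c' := by
        intro c'; simp [hB, transvection_mul_apply_same]; ring
      have hBs : ∀ i, i ≠ r → B i = A i := by
        intro i hir; funext c'; simp [hB, transvection_mul_apply_of_ne, hir]
      set C : Matrix (Fin d) (Fin d) ℤ := swapSign r s * B with hC
      obtain ⟨hCr, hCs, hCi⟩ := swapSign_mul r s hrs B
      have hCrA : C r = A s := by rw [hC, hCr, hBs s hrs.symm]
      have hCsc : C s c = - (A r c % A s c) := by
        rw [hC, hCs]; simp [hBr]; rw [Int.emod_def]; ring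
      have hsize : (C s c).natAbs ≤ n := by
        have h1 : A r c % A s c < |A s c| := Int.emod_lt_abs _ h0
        have h2 : 0 ≤ A r c % A s c := Int.emod_nonneg _ h0
        have h1 : A r c % A s c < |A s c| := Int.emod_lt_abs _ h0
        have h2 : 0 ≤ A r c % A s c := Int.emod_nonneg _ h0
        rw [Int.abs_eq_natAbs] at h1
        rw [hCsc]
        omega
      obtain ⟨M', hM'det, hM'i, hM'z, hM'sc⟩ := IH C hsize
      refine ⟨M' * (swapSign r s * transvection r s (-q)), ?_, ?_, ?_, ?_⟩
      · rw [det_mul, det_mul]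
        exact hM'det.mul ((det_swapSign r s hrs).mul (by simp [det_transvection_of_ne _ _ hrs]))
      · intro i hir his
        have : M' * (swapSign r s * transvection r s (-q)) * A = M' * C := by
          rw [hC, hB]; simp [Matrix.mul_assoc]
        rw [this, hM'i i hir his, hC, hCi i hir his, hBs i hir]
      · intro c' h1 h2
        have hE : M' * (swapSign r s * transvection r s (-q)) * A = M' * C := by
          rw [hC, hB]; simp [Matrix.mul_assoc]
        have hCr0 : C r c' = 0 := by rw [hCrA]; exact h2
        have hCs0 : C s c' = 0 := by
          rw [hC, hCs]; simp [hBr, h1, h2]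
        have := hM'z c' hCr0 hCs0
        rw [hE]; exact this
      · have hE : M' * (swapSign r s * transvection r s (-q)) * A = M' * C := by
          rw [hC, hB]; simp [Matrix.mul_assoc]
        rw [hE]; exact hM'sc



lemma clear_col (k : Fin d) :
    ∀ (S : Finset (Fin d)) (A : Matrix (Fin d) (Fin d) ℤ),
    (∀ i j : Fin d, j < i → j < k → A i j = 0) →
    (∀ i, k < i → i ∉ S → A i k = 0) →
    ∃ M : Matrix (Fin d) (Fin d) ℤ, IsUnit M.det ∧
      (∀ i j : Fin d, j < i → j < k → (M * A) i j = 0) ∧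
      (∀ i, k < i → (M * A) i k = 0) := by
  intro S
  induction S using Finset.induction with
  | empty =>
    intro A hinv hS
    exact ⟨1, by simp, by simpa using hinv, by
      intro i hi; simpa using hS i hi (Finset.notMem_empty i)⟩
  | @insert i₀' S' hi₀S IH =>
    intro A hinv hS
    by_cases hki : k < i₀'
    · have hne : k ≠ i₀' := ne_of_lt hki
      obtain ⟨M₁, hM₁det, hM₁i, hM₁z, hM₁c⟩ :=
        clear_entry k i₀' k hne (A i₀' k).natAbs A le_rfl
      have hinv' : ∀ i j : Fin d, j < i → j < k → (M₁ * A) i j = 0 := by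
        intro i j hji hjk
        by_cases h1 : i = k
        · subst h1
          exact ((hM₁z j (hinv i j hji hjk) (hinv i₀' j (lt_trans hjk hki) hjk)).1)
        · by_cases h2 : i = i₀'
          · subst h2
            exact ((hM₁z j (hinv k j hjk hjk) (hinv i j hji hjk)).2)
          · rw [hM₁i i h1 h2]; exact hinv i j hji hjk
      have hS' : ∀ i, k < i → i ∉ S' → (M₁ * A) i k = 0 := by
        intro i hi hiS
        by_cases h2 : i = i₀'
        · subst h2; exact hM₁c
        · have h1 : i ≠ k := ne_of_gt hi
          rw [hM₁i i h1 h2]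
          exact hS i hi (by simp [h2, hiS])
      obtain ⟨M₂, hM₂det, hM₂inv, hM₂c⟩ := IH (M₁ * A) hinv' hS'
      refine ⟨M₂ * M₁, ?_, ?_, ?_⟩
      · rw [det_mul]; exact hM₂det.mul hM₁det
      · intro i j hji hjk; rw [Matrix.mul_assoc]; exact hM₂inv i j hji hjk
      · intro i hi; rw [Matrix.mul_assoc]; exact hM₂c i hi
    · refine IH A hinv ?_
      intro i hi hiS
      refine hS i hi ?_
      simp only [Finset.mem_insert]
      push_neg
      exact ⟨fun h => hki (h ▸ hi), hiS⟩

lemma triang : ∀ (k : ℕ) (A : Matrix (Fin d) (Fin d) ℤ),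
    ∃ M : Matrix (Fin d) (Fin d) ℤ, IsUnit M.det ∧
      ∀ i j : Fin d, j < i → (j : ℕ) < k → (M * A) i j = 0 := by
  intro k
  induction k with
  | zero => intro A; exact ⟨1, by simp, by omega⟩
  | succ k IH =>
    intro A
    obtain ⟨M₁, hM₁det, hM₁⟩ := IH A
    by_cases hk : k < d
    · set kk : Fin d := ⟨k, hk⟩ with hkk
      obtain ⟨M₂, hM₂det, hM₂inv, hM₂c⟩ := clear_col kk Finset.univ (M₁ * A)
        (fun i j hji hjk => hM₁ i j hji hjk) (fun i _ hi => absurd (Finset.mem_univ i) hi)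
      refine ⟨M₂ * M₁, by rw [det_mul]; exact hM₂det.mul hM₁det, ?_⟩
      intro i j hji hjk
      rw [Matrix.mul_assoc]
      rcases Nat.lt_or_ge (j : ℕ) k with h | h
      · exact hM₂inv i j hji h
      · have : j = kk := by
          apply Fin.ext; simp [hkk]; omega
        subst this
        exact hM₂c i hji
    · refine ⟨M₁, hM₁det, ?_⟩
      intro i j hji _
      exact hM₁ i j hji (by omega)


lemma reduce_col (kk : Fin d) :
    ∀ (S : Finset (Fin d)) (H : Matrix (Fin d) (Fin d) ℤ),
    (∀ i j : Fin d, j < i → H i j = 0) → (∀ j, 0 < H j j) →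
    (∀ i, i < kk → i ∉ S → 0 ≤ H i kk ∧ H i kk < H kk kk) →
    ∃ M : Matrix (Fin d) (Fin d) ℤ, IsUnit M.det ∧
      (∀ i j : Fin d, j < i → (M * H) i j = 0) ∧
      (∀ j, (M * H) j j = H j j) ∧
      (∀ i j : Fin d, j < kk → (M * H) i j = H i j) ∧
      (∀ i, i < kk → 0 ≤ (M * H) i kk ∧ (M * H) i kk < H kk kk) := by
  intro S
  induction S using Finset.induction with
  | empty =>
    intro H htri hdiag hred
    exact ⟨1, by simp, by simpa using htri, by simp, by simp, by
      intro i hi; simpa using hred i hi (Finset.notMem_empty i)⟩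
  | @insert i₀ S hi₀S IH =>
    intro H htri hdiag hred
    by_cases hik : i₀ < kk
    · have hne : i₀ ≠ kk := ne_of_lt hik
      set q : ℤ := H i₀ kk / H kk kk with hq
      set H' : Matrix (Fin d) (Fin d) ℤ := transvection i₀ kk (-q) * H with hH'
      have hrow : ∀ c, H' i₀ c = H i₀ c - q * H kk c := by
        intro c; simp [hH', transvection_mul_apply_same]; ring
      have hother : ∀ i, i ≠ i₀ → H' i = H i := by
        intro i hi; funext c; simp [hH', transvection_mul_apply_of_ne, hi]
      have htri' : ∀ i j : Fin d, j < i → H' i j = 0 := by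
        intro i j hji
        by_cases h1 : i = i₀
        · subst h1
          rw [hrow, htri _ _ hji, htri _ _ (lt_trans hji hik)]; ring
        · rw [hother i h1]; exact htri i j hji
      have hdiag' : ∀ j, H' j j = H j j := by
        intro j
        by_cases h1 : j = i₀
        · subst h1; rw [hrow, htri _ _ hik]; ring
        · rw [hother j h1]
      have hcols' : ∀ i j : Fin d, j < kk → H' i j = H i j := by
        intro i j hj
        by_cases h1 : i = i₀
        · subst h1; rw [hrow, htri _ _ hj]; ring
        · rw [hother i h1]
      have hred' : ∀ i, i < kk → i ∉ S → 0 ≤ H' i kk ∧ H' i kk < H' kk kk := by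
        intro i hi hiS
        rw [hdiag' kk]
        by_cases h1 : i = i₀
        · subst h1
          have : H' i kk = H i kk % H kk kk := by rw [hrow, Int.emod_def]; ring
          rw [this]
          exact ⟨Int.emod_nonneg _ (ne_of_gt (hdiag kk)), Int.emod_lt_of_pos _ (hdiag kk)⟩
        · rw [hother i h1]
          exact hred i hi (by simp [h1, hiS])
      obtain ⟨M₂, hM₂det, h1, h2, h3, h4⟩ := IH H' htri' (fun j => (hdiag' j) ▸ hdiag j) hred'
      refine ⟨M₂ * transvection i₀ kk (-q), ?_, ?_, ?_, ?_, ?_⟩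
      · rw [det_mul, det_transvection_of_ne _ _ hne]
        simpa using hM₂det
      · intro i j hji; rw [Matrix.mul_assoc]; exact h1 i j hji
      · intro j; rw [Matrix.mul_assoc, ← hH']; rw [h2 j, hdiag' j]
      · intro i j hj; rw [Matrix.mul_assoc, ← hH', h3 i j hj, hcols' i j hj]
      · intro i hi
        rw [Matrix.mul_assoc, ← hH']
        have := h4 i hi
        rwa [hdiag' kk] at this
    · refine IH H htri hdiag ?_
      intro i hi hiS
      refine hred i hi ?_
      simp only [Finset.mem_insert]
      push_neg
      exact ⟨fun h => hik (h ▸ hi), hiS⟩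

lemma reduce_cols : ∀ (k : ℕ) (H : Matrix (Fin d) (Fin d) ℤ),
    (∀ i j : Fin d, j < i → H i j = 0) → (∀ j, 0 < H j j) →
    ∃ M : Matrix (Fin d) (Fin d) ℤ, IsUnit M.det ∧
      (∀ i j : Fin d, j < i → (M * H) i j = 0) ∧
      (∀ j, (M * H) j j = H j j) ∧
      (∀ i j : Fin d, i < j → (j : ℕ) < k → 0 ≤ (M * H) i j ∧ (M * H) i j < (M * H) j j) := by
  intro k
  induction k with
  | zero => intro H htri hdiag; exact ⟨1, by simp, by simpa using htri, by simp, by omega⟩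
  | succ k IH =>
    intro H htri hdiag
    obtain ⟨M₁, hM₁det, hM₁tri, hM₁diag, hM₁red⟩ := IH H htri hdiag
    by_cases hk : k < d
    · set kk : Fin d := ⟨k, hk⟩ with hkk
      obtain ⟨M₂, hM₂det, h1, h2, h3, h4⟩ := reduce_col kk Finset.univ (M₁ * H)
        hM₁tri (fun j => (hM₁diag j) ▸ hdiag j) (fun i _ hi => absurd (Finset.mem_univ i) hi)
      refine ⟨M₂ * M₁, by rw [det_mul]; exact hM₂det.mul hM₁det, ?_, ?_, ?_⟩
      · intro i j hji; rw [Matrix.mul_assoc]; exact h1 i j hji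
      · intro j; rw [Matrix.mul_assoc, h2 j, hM₁diag j]
      · intro i j hij hjk
        rw [Matrix.mul_assoc]
        rcases Nat.lt_or_ge (j : ℕ) k with h | h
        · have hjkk : j < kk := by simp [hkk, Fin.lt_def]; omega
          rw [h3 i j hjkk, h3 j j hjkk]
          exact hM₁red i j hij h
        · have : j = kk := by apply Fin.ext; simp [hkk]; omega
          subst this
          have := h4 i hij
          rwa [← h2 kk] at this
    · refine ⟨M₁, hM₁det, hM₁tri, hM₁diag, ?_⟩
      intro i j hij _
      exact hM₁red i j hij (by omega)

lemma hnf (A : Matrix (Fin d) (Fin d) ℤ) (hdet : A.det ≠ 0) :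
    ∃ M : Matrix (Fin d) (Fin d) ℤ, IsUnit M.det ∧
      (∀ i j : Fin d, j < i → (M * A) i j = 0) ∧
      (∀ j, 0 < (M * A) j j) ∧
      (∀ i j : Fin d, i < j → 0 ≤ (M * A) i j ∧ (M * A) i j < (M * A) j j) := by
  obtain ⟨M₁, hM₁det, hM₁⟩ := triang d A
  have htri : ∀ i j : Fin d, j < i → (M₁ * A) i j = 0 := fun i j h => hM₁ i j h j.isLt
  have hdet1 : (M₁ * A).det ≠ 0 := by
    rw [det_mul]
    exact mul_ne_zero hM₁det.ne_zero hdet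
  have hdiagne : ∀ j, (M₁ * A) j j ≠ 0 := by
    intro j hj
    apply hdet1
    rw [det_of_upperTriangular htri]
    exact Finset.prod_eq_zero (Finset.mem_univ j) hj
  set D : Matrix (Fin d) (Fin d) ℤ :=
    Matrix.diagonal (fun i => if (M₁ * A) i i < 0 then -1 else 1) with hD
  have hDdet : IsUnit D.det := by
    apply IsUnit.of_mul_eq_one D.det
    rw [hD, det_diagonal, ← Finset.prod_mul_distrib]
    apply Finset.prod_eq_one
    intro i _
    split <;> norm_num
  have hDmul : ∀ i j, (D * (M₁ * A)) i j
      = (if (M₁ * A) i i < 0 then -1 else 1) * (M₁ * A) i j := by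
    intro i j; rw [hD, diagonal_mul]
  have htri2 : ∀ i j : Fin d, j < i → (D * (M₁ * A)) i j = 0 := by
    intro i j h; rw [hDmul, htri i j h, mul_zero]
  have hdiag2 : ∀ j, 0 < (D * (M₁ * A)) j j := by
    intro j
    rw [hDmul]
    rcases lt_trichotomy ((M₁ * A) j j) 0 with h | h | h
    · simp [h]
    · exact absurd h (hdiagne j)
    · simp [not_lt.mpr h.le, h]
  obtain ⟨M₂, hM₂det, h1, h2, h3⟩ := reduce_cols d (D * (M₁ * A)) htri2 hdiag2
  refine ⟨M₂ * (D * M₁), ?_, ?_, ?_, ?_⟩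
  · rw [det_mul, det_mul]
    exact hM₂det.mul (hDdet.mul hM₁det)
  all_goals
    have hE : M₂ * (D * M₁) * A = M₂ * (D * (M₁ * A)) := by
      simp [Matrix.mul_assoc]
  · intro i j h; rw [hE]; exact h1 i j h
  · intro j; rw [hE, h2 j]; exact hdiag2 j
  · intro i j h
    rw [hE]
    exact h3 i j h j.isLt

open MeasureTheory ENNReal Pointwise

/-- Vertices of the standard corner simplex. -/
noncomputable def gstd (d : ℕ) : Fin (d + 1) → Fin d → ℝ :=
  Fin.cons 0 (fun q => Pi.single q 1)

/-- The standard corner simplex. -/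
noncomputable def Sstd (d : ℕ) : Set (Fin d → ℝ) :=
  convexHull ℝ (Set.range (gstd d))

/-- Sorting matrix for a permutation. -/
noncomputable def Cmat (d : ℕ) (σ : Equiv.Perm (Fin d)) : Matrix (Fin d) (Fin d) ℝ :=
  Matrix.of fun p q => if σ.symm p ≤ q then 1 else 0

lemma abs_det_Cmat (d : ℕ) (σ : Equiv.Perm (Fin d)) : |(Cmat d σ).det| = 1 := by
  set D : Matrix (Fin d) (Fin d) ℝ := Matrix.of fun l q => if l ≤ q then 1 else 0 with hD
  have hDdet : D.det = 1 := by
    rw [det_of_upperTriangular (by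
      intro i j hji
      simp only [hD, Matrix.of_apply]
      rw [if_neg (by exact not_le.mpr hji)])]
    simp [hD]
  have hsub : D.submatrix σ.symm id = Cmat d σ := by
    ext p q; simp [hD, Cmat, Matrix.submatrix_apply]
  have := Matrix.det_permute σ.symm D
  rw [hsub] at this
  rw [this, hDdet, mul_one]
  rcases Int.units_eq_one_or (Equiv.Perm.sign σ.symm) with h | h <;> simp [h]

set_option maxHeartbeats 2000000 in
lemma cube_subset_union (d : ℕ) :
    (Set.pi Set.univ fun _ : Fin d => Set.Icc (0:ℝ) 1) ⊆
      ⋃ σ : Equiv.Perm (Fin d), Matrix.toLin' (Cmat d σ) '' Sstd d := by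
  intro x hx
  have hx' : ∀ p, x p ∈ Set.Icc (0:ℝ) 1 := fun p => hx p (Set.mem_univ p)
  set σ : Equiv.Perm (Fin d) := Fin.revPerm.trans (Tuple.sort x) with hσ
  have hanti : ∀ k k' : Fin d, k ≤ k' → x (σ k') ≤ x (σ k) := by
    intro k k' hk
    have := Tuple.monotone_sort x (Fin.rev_le_rev.mpr hk)
    simpa [hσ, Equiv.trans_apply] using this
  set h : ℕ → ℝ := fun k => if hk : k < d then x (σ ⟨k, hk⟩) else 0 with hh
  have hanti' : ∀ k : ℕ, h (k + 1) ≤ h k := by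
    intro k
    by_cases h1 : k + 1 < d
    · have h0 : k < d := by omega
      simp only [hh, dif_pos h1, dif_pos h0]
      exact hanti ⟨k, h0⟩ ⟨k + 1, h1⟩ (by simp [Fin.le_def])
    · by_cases h0 : k < d
      · simp only [hh, dif_neg h1, dif_pos h0]
        exact (hx' _).1
      · simp [hh, dif_neg h1, dif_neg h0]
  set w : Fin (d + 1) → ℝ := Fin.cons (1 - h 0) (fun k => h (k : ℕ) - h ((k : ℕ) + 1)) with hw
  set z : Fin (d + 1) → Fin d → ℝ := fun i => Matrix.toLin' (Cmat d σ) (gstd d i) with hz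
  have hw0 : ∀ i, 0 ≤ w i := by
    intro i
    induction i using Fin.cases with
    | zero =>
      simp only [hw, Fin.cons_zero, sub_nonneg, hh]
      split
      · exact (hx' _).2
      · norm_num
    | succ k => simp only [hw, Fin.cons_succ, sub_nonneg]; exact hanti' _
  have hsum : ∑ i, w i = 1 := by
    rw [Fin.sum_univ_succ]
    simp only [hw, Fin.cons_zero, Fin.cons_succ]
    rw [Fin.sum_univ_eq_sum_range (fun k => h k - h (k + 1)), Finset.sum_range_sub']
    have hd : h d = 0 := by simp [hh]
    rw [hd]; ring
  have hcomb : ∑ i, w i • z i = x := by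
    funext p
    rw [Finset.sum_apply]
    simp only [Pi.smul_apply, smul_eq_mul]
    rw [Fin.sum_univ_succ]
    have hz0 : z 0 = 0 := by
      simp [hz, gstd, Fin.cons_zero]
    have hzs : ∀ k : Fin d, z k.succ p = if σ.symm p ≤ k then 1 else 0 := by
      intro k
      simp [hz, gstd, Fin.cons_succ, Matrix.toLin'_apply, Matrix.mulVec_single, Cmat]
    rw [hz0]
    simp only [Pi.zero_apply, mul_zero, zero_add]
    set m : Fin d := σ.symm p with hm
    have hxp : x p = h (m : ℕ) := by
      simp only [hh]
      rw [dif_pos m.isLt]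
      congr 1
      simp [hm]
    calc ∑ k : Fin d, w k.succ * z k.succ p
        = ∑ k : Fin d, (if (m : ℕ) ≤ (k : ℕ) then h (k : ℕ) - h ((k : ℕ) + 1) else 0) := by
          apply Finset.sum_congr rfl
          intro k _
          rw [hzs k]
          simp only [hw, Fin.cons_succ]
          by_cases hc : m ≤ k
          · rw [if_pos hc, if_pos (Fin.le_def.mp hc), mul_one]
          · rw [if_neg hc, if_neg (fun hn => hc (Fin.le_def.mpr hn)), mul_zero]
      _ = ∑ k ∈ Finset.range d, (if (m : ℕ) ≤ k then h k - h (k + 1) else 0) :=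
          Fin.sum_univ_eq_sum_range (fun k => if (m : ℕ) ≤ k then h k - h (k + 1) else 0) d
      _ = ∑ k ∈ Finset.Ico (m : ℕ) d, (h k - h (k + 1)) := by
          rw [← Finset.sum_filter]
          congr 1
          ext k
          simp only [Finset.mem_filter, Finset.mem_range, Finset.mem_Ico]
          omega
      _ = x p := by
          rw [Finset.sum_Ico_eq_sub _ (le_of_lt m.isLt), Finset.sum_range_sub',
            Finset.sum_range_sub']
          have hd : h d = 0 := by simp [hh]
          rw [hd, hxp]; ring
  refine Set.mem_iUnion.mpr ⟨σ, ?_⟩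
  have hmem : x ∈ convexHull ℝ (Set.range z) := by
    have := Finset.centerMass_mem_convexHull (Finset.univ : Finset (Fin (d + 1)))
      (fun i _ => hw0 i) (by rw [hsum]; norm_num)
      (fun i _ => Set.mem_range_self (f := z) i)
    rwa [Finset.centerMass_eq_of_sum_1 _ _ hsum, hcomb] at this
  have : Set.range z = Matrix.toLin' (Cmat d σ) '' Set.range (gstd d) := by
    rw [hz, ← Set.range_comp]
    rfl
  rw [this] at hmem
  rwa [← LinearMap.image_convexHull] at hmem

lemma one_le_factorial_mul_volume (d : ℕ) :
    (1 : ℝ≥0∞) ≤ (d.factorial : ℝ≥0∞) * volume (Sstd d) := by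
  have hcube : volume (Set.pi Set.univ fun _ : Fin d => Set.Icc (0:ℝ) 1) = 1 := by
    rw [volume_pi_pi]
    simp [Real.volume_Icc]
  calc (1 : ℝ≥0∞) = volume (Set.pi Set.univ fun _ : Fin d => Set.Icc (0:ℝ) 1) := hcube.symm
    _ ≤ volume (⋃ σ : Equiv.Perm (Fin d), Matrix.toLin' (Cmat d σ) '' Sstd d) :=
        measure_mono (cube_subset_union d)
    _ ≤ ∑' σ : Equiv.Perm (Fin d), volume (Matrix.toLin' (Cmat d σ) '' Sstd d) :=
        measure_iUnion_le _
    _ = ∑ σ : Equiv.Perm (Fin d), volume (Matrix.toLin' (Cmat d σ) '' Sstd d) :=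
        tsum_fintype _
    _ = ∑ σ : Equiv.Perm (Fin d), volume (Sstd d) := by
        apply Finset.sum_congr rfl
        intro σ _
        rw [Measure.addHaar_image_linearMap, LinearMap.det_toLin', abs_det_Cmat, ENNReal.ofReal_one,
          one_mul]
    _ = (d.factorial : ℝ≥0∞) * volume (Sstd d) := by
        rw [Finset.sum_const, Finset.card_univ, Fintype.card_perm, Fintype.card_fin, nsmul_eq_mul]

lemma volume_hull_eq (d : ℕ) (B : Matrix (Fin d) (Fin d) ℝ) (v : Fin (d + 1) → Fin d → ℝ)
    (hv : ∀ i, v i = v 0 + Matrix.toLin' B (gstd d i)) :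
    volume (convexHull ℝ (Set.range v)) = ENNReal.ofReal |B.det| * volume (Sstd d) := by
  have hfun : v = (fun y => v 0 + y) ∘ ⇑(Matrix.toLin' B) ∘ gstd d := funext hv
  have hrange : Set.range v = (fun y => v 0 + y) '' (Matrix.toLin' B '' Set.range (gstd d)) := by
    conv_lhs => rw [hfun]
    rw [Set.range_comp, Set.range_comp]
  rw [hrange]
  have h1 : convexHull ℝ ((fun y => v 0 + y) '' (Matrix.toLin' B '' Set.range (gstd d)))
      = (fun y => v 0 + y) '' (Matrix.toLin' B '' convexHull ℝ (Set.range (gstd d))) := by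
    rw [LinearMap.image_convexHull]
    have := (AffineEquiv.constVAdd ℝ (Fin d → ℝ) (v 0)).toAffineMap.image_convexHull
      ((Matrix.toLin' B) '' Set.range (gstd d))
    convert this.symm using 2
    all_goals rfl
  rw [h1]
  have h2 : (fun y => v 0 + y) '' (Matrix.toLin' B '' convexHull ℝ (Set.range (gstd d)))
      = (v 0) +ᵥ (Matrix.toLin' B '' convexHull ℝ (Set.range (gstd d))) := by
    simp_rw [← Set.image_vadd, vadd_eq_add]
  rw [h2, measure_vadd, Measure.addHaar_image_linearMap, LinearMap.det_toLin']
  rfl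

end Stmt3Aux

open MeasureTheory ENNReal Stmt3Aux


set_option maxHeartbeats 2000000 in
/-- Up to unimodular equivalence there are finitely many `d`-dimensional lattice
simplices of normalized volume at most `K`: there is a finite set `T` of vertex
tuples such that every `d`-simplex with vertices in `ℤ^d` and normalized volume
at most `K` is mapped onto (the convex hull of) a member of `T` by some affine
unimodular map `x ↦ Mx + b`. -/
theorem stmt3 (d K : ℕ) (hd : 0 < d) (hK : 0 < K) :
    ∃ T : Finset (Fin (d + 1) → Fin d → ℤ),
      ∀ v : Fin (d + 1) → Fin d → ℤ,
        AffineIndependent ℝ (fun i => toR (v i)) →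
        (Nat.factorial d : ℝ) *
            (volume (convexHull ℝ (Set.range fun i => toR (v i)))).toReal ≤ K →
        ∃ w ∈ T, ∃ (M : Matrix (Fin d) (Fin d) ℤ) (b : Fin d → ℤ),
          IsUnit M.det ∧
          convexHull ℝ (Set.range fun i => toR (M.mulVec (v i) + b)) =
            convexHull ℝ (Set.range fun i => toR (w i)) := by
  classical
  refine ⟨Fintype.piFinset (fun _ : Fin (d + 1) =>
    Fintype.piFinset (fun _ : Fin d => Finset.Icc (-(K : ℤ)) (K : ℤ))), ?_⟩
  intro v haff hvol
  set A : Matrix (Fin d) (Fin d) ℤ := Matrix.of (fun p q => v q.succ p - v 0 p) with hA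
  set B : Matrix (Fin d) (Fin d) ℝ := A.map Int.cast with hB
  have hBpq : ∀ p q, B p q = (v q.succ p : ℝ) - (v 0 p : ℝ) := by
    intro p q; simp [hB, hA]
  have hv : ∀ i, toR (v i) = toR (v 0) + Matrix.toLin' B (gstd d i) := by
    intro i
    induction i using Fin.cases with
    | zero => simp [gstd, Fin.cons_zero]
    | succ q =>
      funext p
      simp only [toR, Pi.add_apply, gstd, Fin.cons_succ, Matrix.toLin'_apply,
        Matrix.mulVec_single, mul_one, hBpq, MulOpposite.op_one, one_smul, Matrix.col_apply]
      ring
  have hli : LinearIndependent ℝ (fun q : Fin d => Bᵀ q) := by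
    rw [affineIndependent_iff_linearIndependent_vsub ℝ _ 0] at haff
    have hinj : Function.Injective
        (fun q : Fin d => (⟨q.succ, Fin.succ_ne_zero q⟩ : {x : Fin (d + 1) // x ≠ 0})) := by
      intro a b hab
      exact Fin.succ_injective d (congrArg Subtype.val hab)
    have h0 := haff.comp (fun q : Fin d =>
      (⟨q.succ, Fin.succ_ne_zero q⟩ : {x : Fin (d + 1) // x ≠ 0})) hinj
    have hfe : (fun q : Fin d => Bᵀ q) =
        (fun i : {x : Fin (d + 1) // x ≠ 0} => toR (v ↑i) -ᵥ toR (v (0 : Fin (d + 1)))) ∘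
          (fun q : Fin d => (⟨q.succ, Fin.succ_ne_zero q⟩ : {x : Fin (d + 1) // x ≠ 0})) := by
      funext q
      funext p
      simp [vsub_eq_sub, hBpq, toR]
    rw [hfe]
    exact h0
  have hunitB : IsUnit B := by
    rw [← Matrix.linearIndependent_cols_iff_isUnit]
    exact hli
  have hdetB : B.det ≠ 0 := ((Matrix.isUnit_iff_isUnit_det B).mp hunitB).ne_zero
  have hdetBA : ((A.det : ℤ) : ℝ) = B.det := by
    simpa using RingHom.map_det (Int.castRingHom ℝ) A
  have hdetA : A.det ≠ 0 := by
    intro h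
    rw [h] at hdetBA
    exact hdetB (by exact_mod_cast hdetBA.symm)
  -- volume bound
  have hBK : |B.det| ≤ (K : ℝ) := by
    have hSfin : volume (Sstd d) ≠ ⊤ := by
      refine (IsCompact.measure_lt_top ?_).ne
      exact (Set.finite_range _).isCompact_convexHull ℝ
    have heq := volume_hull_eq d B (fun i => toR (v i)) hv
    have h1 : (1 : ℝ) ≤ (d.factorial : ℝ) * (volume (Sstd d)).toReal := by
      have h2 := one_le_factorial_mul_volume d
      have h3 : ((1 : ℝ≥0∞)).toReal ≤ ((d.factorial : ℝ≥0∞) * volume (Sstd d)).toReal := by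
        refine ENNReal.toReal_mono ?_ h2
        exact ENNReal.mul_ne_top (ENNReal.natCast_ne_top _) hSfin
      rw [ENNReal.toReal_one, ENNReal.toReal_mul] at h3
      simpa using h3
    have h4 : (volume (convexHull ℝ (Set.range fun i => toR (v i)))).toReal
        = |B.det| * (volume (Sstd d)).toReal := by
      rw [heq, ENNReal.toReal_mul, ENNReal.toReal_ofReal (abs_nonneg _)]
    rw [h4] at hvol
    nlinarith [abs_nonneg B.det, (volume (Sstd d)).toReal_nonneg]
  have hnatK : (A.det.natAbs : ℤ) ≤ (K : ℤ) := by
    have h1 : |((A.det : ℤ) : ℝ)| ≤ (K : ℝ) := by rw [hdetBA]; exact hBK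
    rw [← Int.cast_abs] at h1
    have h2 : |A.det| ≤ (K : ℤ) := by exact_mod_cast h1
    rwa [Int.abs_eq_natAbs] at h2
  -- Hermite normal form
  obtain ⟨M, hMdet, htri, hdiagpos, hred⟩ := Stmt3Aux.hnf A hdetA
  set H : Matrix (Fin d) (Fin d) ℤ := M * A with hH
  have hdetH : H.det = ∏ j, H j j := Matrix.det_of_upperTriangular htri
  have hpos : 0 < H.det := by
    rw [hdetH]
    exact Finset.prod_pos (fun i _ => hdiagpos i)
  have habs : H.det = |A.det| := by
    have h1 : |H.det| = |A.det| := by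
      rw [hH, Matrix.det_mul, abs_mul]
      rcases Int.isUnit_iff.mp hMdet with h | h <;> simp [h]
    rw [← h1, abs_of_pos hpos]
  have hdiagle : ∀ j, H j j ≤ (K : ℤ) := by
    intro j
    have herase : (1 : ℤ) ≤ ∏ i ∈ Finset.univ.erase j, H i i :=
      Finset.prod_induction _ (fun x => (1 : ℤ) ≤ x) (fun a b ha hb => by nlinarith)
        le_rfl (fun i _ => by have := hdiagpos i; omega)
    calc H j j ≤ H j j * ∏ i ∈ Finset.univ.erase j, H i i :=
          le_mul_of_one_le_right (hdiagpos j).le herase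
      _ = ∏ i, H i i := Finset.mul_prod_erase Finset.univ (fun i => H i i) (Finset.mem_univ j)
      _ = H.det := hdetH.symm
      _ = |A.det| := habs
      _ ≤ (K : ℤ) := by rw [Int.abs_eq_natAbs]; exact hnatK
  have hHle : ∀ p q, 0 ≤ H p q ∧ H p q ≤ (K : ℤ) := by
    intro p q
    rcases lt_trichotomy p q with h | h | h
    · exact ⟨(hred p q h).1, le_trans (le_of_lt (hred p q h).2) (hdiagle q)⟩
    · subst h
      exact ⟨le_of_lt (hdiagpos p), hdiagle p⟩
    · rw [htri p q h]
      exact ⟨le_rfl, by positivity⟩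
  refine ⟨Fin.cons 0 (fun q p => H p q), ?_, M, -(M.mulVec (v 0)), hMdet, ?_⟩
  · rw [Fintype.mem_piFinset]
    intro i
    rw [Fintype.mem_piFinset]
    intro p
    rw [Finset.mem_Icc]
    induction i using Fin.cases with
    | zero =>
      simp only [Fin.cons_zero, Pi.zero_apply]
      constructor <;> omega
    | succ q =>
      simp only [Fin.cons_succ]
      obtain ⟨h1, h2⟩ := hHle p q
      constructor <;> omega
  · have hfun : (fun i => toR (M.mulVec (v i) + -(M.mulVec (v 0))))
        = fun i => toR ((Fin.cons (0 : Fin d → ℤ) (fun q p => H p q) : Fin (d + 1) → Fin d → ℤ) i) := by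
      funext i
      induction i using Fin.cases with
      | zero =>
        funext p
        simp [toR]
      | succ q =>
        funext p
        have hz : (M.mulVec (v q.succ) + -(M.mulVec (v 0))) p = H p q := by
          simp only [Pi.add_apply, Pi.neg_apply, Matrix.mulVec, Matrix.mul_apply, dotProduct, hH,
            hA, Matrix.of_apply, mul_sub, Finset.sum_sub_distrib]
          ring
        simp only [toR]
        rw [Fin.cons_succ]
        exact congrArg Int.cast hz
    rw [hfun]
end

section
/- Up to unimodular equivalence, there are finitely many d-dimensional lattice polytopes with normalized volume at most K, for any fixed positive integers d and K. -/
open MeasureTheory Pointwise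

lemma toR_mulVec {d : ℕ} (M : Matrix (Fin d) (Fin d) ℤ) (x : Fin d → ℤ) :
    toR (M.mulVec x) = (M.map (Int.cast : ℤ → ℝ)).mulVec (toR x) := by
  funext i
  simp only [toR, Matrix.mulVec, dotProduct, Matrix.map_apply]
  push_cast
  rfl

lemma simplex_vol {d : ℕ} (hd : 0 < d) (B : Matrix (Fin d) (Fin d) ℝ) (v0 : Fin d → ℝ)
    (s : Set (Fin d → ℝ)) (hconv : Convex ℝ s) (h0 : v0 ∈ s)
    (hp : ∀ j, (v0 + fun i => B i j) ∈ s) :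
    ENNReal.ofReal (|B.det| * (1/d)^d) ≤ volume s := by
  set box : Set (Fin d → ℝ) := Set.univ.pi (fun _ => Set.Icc 0 (1/d)) with hbox
  have hsub : v0 +ᵥ ((Matrix.toLin' B) '' box) ⊆ s := by
    rintro _ ⟨_, ⟨y, hy, rfl⟩, rfl⟩
    simp only [hbox, Set.mem_pi, Set.mem_univ, Set.mem_Icc, forall_true_left] at hy
    have hsum : ∑ j, y j ≤ 1 := by
      calc ∑ j, y j ≤ ∑ _j : Fin d, (1/d : ℝ) := Finset.sum_le_sum (fun j _ => (hy j).2)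
      _ = 1 := by
        rw [Finset.sum_const, Finset.card_univ, Fintype.card_fin, nsmul_eq_mul]
        field_simp
    have := hconv.sum_mem (t := (Finset.univ : Finset (Fin (d+1))))
      (w := Fin.cons (1 - ∑ j, y j) y)
      (z := Fin.cons v0 (fun j => v0 + fun i => B i j)) ?_ ?_ ?_
    · convert this using 1
      rw [Fin.sum_univ_succ]
      simp only [Fin.cons_zero, Fin.cons_succ]
      rw [Matrix.toLin'_apply]
      ext i
      simp only [Pi.add_apply, Matrix.mulVec, dotProduct, Finset.sum_apply,
        Pi.smul_apply, smul_eq_mul, Pi.sub_apply, vadd_eq_add, mul_add]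
      rw [Finset.sum_add_distrib, ← Finset.sum_mul,
        Finset.sum_congr rfl (fun x _ => mul_comm (y x) (B i x))]
      ring
    · intro i _
      refine Fin.cases ?_ ?_ i
      · simpa using hsum
      · intro j; simpa using (hy j).1
    · rw [Fin.sum_cons]; ring
    · intro i _
      refine Fin.cases ?_ ?_ i
      · simpa using h0
      · intro j; simpa using hp j
  calc ENNReal.ofReal (|B.det| * (1/d)^d)
      = volume (v0 +ᵥ ((Matrix.toLin' B) '' box)) := by
        rw [measure_vadd, Measure.addHaar_image_linearMap]
        have hbv : volume box = ENNReal.ofReal ((1/d)^d) := by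
          rw [hbox, volume_pi_pi]
          simp only [Real.volume_Icc, sub_zero]
          rw [Finset.prod_const, Finset.card_univ, Fintype.card_fin,
            ← ENNReal.ofReal_pow (by positivity)]
        rw [hbv, ← ENNReal.ofReal_mul (abs_nonneg _)]
        congr 2
        rw [LinearMap.det_toLin']
    _ ≤ volume s := measure_mono hsub

def rowLat {d : ℕ} (A : Matrix (Fin d) (Fin d) ℤ) : Submodule ℤ (Fin d → ℤ) :=
  LinearMap.range A.vecMulLinear

lemma det_smul_mem_rowLat {d : ℕ} (A : Matrix (Fin d) (Fin d) ℤ) (z : Fin d → ℤ) :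
    A.det • z ∈ rowLat A := by
  refine ⟨Matrix.vecMul z (Matrix.adjugate A), ?_⟩
  show Matrix.vecMul (Matrix.vecMul z (Matrix.adjugate A)) A = A.det • z
  rw [Matrix.vecMul_vecMul, Matrix.adjugate_mul]
  ext j
  simp [Matrix.vecMul, dotProduct, Matrix.one_apply, mul_ite, mul_comm]

lemma exists_unimodular {d : ℕ} {A B : Matrix (Fin d) (Fin d) ℤ}
    (hA : A.det ≠ 0) (h : rowLat A = rowLat B) :
    ∃ M : Matrix (Fin d) (Fin d) ℤ, IsUnit M.det ∧ B = M * A := by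
  have h1 : ∀ i, ∃ c, Matrix.vecMul c A = B i := by
    intro i
    have : B i ∈ rowLat B := ⟨Pi.single i 1, Matrix.single_one_vecMul i _⟩
    rw [← h] at this; exact this
  have h2 : ∀ i, ∃ c, Matrix.vecMul c B = A i := by
    intro i
    have : A i ∈ rowLat A := ⟨Pi.single i 1, Matrix.single_one_vecMul i _⟩
    rw [h] at this; exact this
  choose C hC using h1
  choose D hD using h2
  have hCA : (Matrix.of C) * A = B := by
    ext i j
    rw [← hC i]; rfl
  have hDB : (Matrix.of D) * B = A := by
    ext i j
    rw [← hD i]; rfl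
  refine ⟨Matrix.of C, ?_, hCA.symm⟩
  have : (Matrix.of D * Matrix.of C) * A = A := by rw [Matrix.mul_assoc, hCA, hDB]
  have hdet : (Matrix.of D).det * (Matrix.of C).det * A.det = A.det := by
    rw [← Matrix.det_mul, ← Matrix.det_mul, this]
  have : (Matrix.of D).det * (Matrix.of C).det = 1 :=
    mul_right_cancel₀ hA (hdet.trans (one_mul A.det).symm)
  exact IsUnit.of_mul_eq_one _ (by rw [mul_comm] at this; exact this)

lemma finite_lattices {d : ℕ} (m : ℕ) (hm : 0 < m) :
    {L : Submodule ℤ (Fin d → ℤ) | ∀ z : Fin d → ℤ, (m : ℤ) • z ∈ L}.Finite := by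
  set box : Set (Fin d → ℤ) := Set.Icc 0 (fun _ => (m : ℤ) - 1) with hbox
  have hboxfin : box.Finite := Set.finite_Icc _ _
  have key : ∀ L ∈ {L : Submodule ℤ (Fin d → ℤ) | ∀ z, (m:ℤ) • z ∈ L},
      ∀ z : Fin d → ℤ, z ∈ L ↔ (fun i => z i % m) ∈ (L : Set _) ∩ box := by
    intro L hL z
    have hq : z - (fun i => z i % m) = (m : ℤ) • (fun i => z i / m) := by
      funext i
      simp only [Pi.sub_apply, Pi.smul_apply, smul_eq_mul]
      have := Int.mul_ediv_add_emod (z i) (m : ℤ)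
      linarith
    have hqm : z - (fun i => z i % m) ∈ L := by rw [hq]; exact hL _
    constructor
    · intro hz
      refine ⟨by simpa using L.sub_mem hz hqm, ?_⟩
      simp only [hbox, Set.mem_Icc]
      constructor
      · intro i
        show (0:ℤ) ≤ z i % (m:ℤ)
        exact Int.emod_nonneg _ (by exact_mod_cast hm.ne')
      · intro i
        have := Int.emod_lt_of_pos (z i) (b := (m:ℤ)) (by exact_mod_cast hm)
        show z i % (m:ℤ) ≤ (m:ℤ) - 1
        linarith
    · rintro ⟨h1, -⟩
      have := L.add_mem h1 hqm
      simpa using this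
  refine Set.Finite.of_finite_image (f := fun L => (L : Set (Fin d → ℤ)) ∩ box) ?_ ?_
  · exact hboxfin.finite_subsets.subset (by rintro _ ⟨L, -, rfl⟩; exact Set.inter_subset_right)
  · rintro L hL L' hL' hLL'
    have hLL'' : (↑L ∩ box : Set (Fin d → ℤ)) = ↑L' ∩ box := hLL'
    ext z
    rw [key L hL z, key L' hL' z, hLL'']

/-- Up to unimodular equivalence there are finitely many `d`-dimensional lattice
polytopes of normalized volume at most `K` (Lagarias--Ziegler): there is a finite
set `T` of finite vertex sets such that every full-dimensional lattice polytope in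
`ℝ^d` with normalized volume at most `K` is mapped onto (the convex hull of) a
member of `T` by some affine unimodular map `x ↦ Mx + b`. -/
theorem stmt4 (d K : ℕ) (hd : 0 < d) (hK : 0 < K) :
    ∃ T : Finset (Finset (Fin d → ℤ)),
      ∀ V : Finset (Fin d → ℤ),
        affineSpan ℝ (convexHull ℝ (toR '' (V : Set (Fin d → ℤ)))) = ⊤ →
        (Nat.factorial d : ℝ) *
            (volume (convexHull ℝ (toR '' (V : Set (Fin d → ℤ))))).toReal ≤ K →
        ∃ W ∈ T, ∃ (M : Matrix (Fin d) (Fin d) ℤ) (b : Fin d → ℤ),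
          IsUnit M.det ∧
          convexHull ℝ ((fun x => toR (M.mulVec x + b)) '' (V : Set (Fin d → ℤ))) =
            convexHull ℝ (toR '' (W : Set (Fin d → ℤ))) := by
  classical
  set KN : ℕ := K * d^d with hKN
  set m : ℕ := KN.factorial with hm
  have hmpos : 0 < m := Nat.factorial_pos _
  set rep : Submodule ℤ (Fin d → ℤ) → Matrix (Fin d) (Fin d) ℤ := fun L =>
    if h : ∃ B : Matrix (Fin d) (Fin d) ℤ, B.det ≠ 0 ∧ rowLat B = L then h.choose else 1
    with hrep
  have hSfin := finite_lattices (d := d) m hmpos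
  set 𝓕 : Finset (Matrix (Fin d) (Fin d) ℤ) := (hSfin.image rep).toFinset with h𝓕
  set N₀ : ℕ := 𝓕.sup fun Bm => Finset.univ.sup fun i => Finset.univ.sup fun j =>
    (Bm i j).natAbs with hN₀
  set N : ℕ := d * N₀ * KN with hN
  refine ⟨(Finset.Icc (fun _ => -(N:ℤ)) (fun _ => (N:ℤ))).powerset, ?_⟩
  intro V hspan hvol
  set P : Set (Fin d → ℝ) := convexHull ℝ (toR '' (V : Set (Fin d → ℤ))) with hP
  have hPfin : volume P ≠ ⊤ := by
    have hcpt : IsCompact P := ((V : Set (Fin d → ℤ)).toFinite.image toR).isCompact_convexHull ℝ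
    exact hcpt.measure_lt_top.ne
  rw [affineSpan_convexHull] at hspan
  obtain ⟨p₀, hp₀⟩ := AffineSubspace.nonempty_of_affineSpan_eq_top ℝ (Fin d → ℝ) (Fin d → ℝ) hspan
  obtain ⟨v₀, hv₀V, rfl⟩ := hp₀
  -- extract a linear basis from differences
  have hvs : Submodule.span ℝ ((· -ᵥ toR v₀) '' (toR '' (V : Set (Fin d → ℤ)))) = ⊤ := by
    have h1 : vectorSpan ℝ (toR '' (V : Set (Fin d → ℤ))) = ⊤ := by
      rw [← direction_affineSpan, hspan]
      exact AffineSubspace.direction_top ℝ _ _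
    rw [vectorSpan_eq_span_vsub_set_right ℝ (Set.mem_image_of_mem toR hv₀V)] at h1
    exact h1
  obtain ⟨bs, hbsub, hbspan, hbind⟩ :=
    exists_linearIndependent ℝ ((· -ᵥ toR v₀) '' (toR '' (V : Set (Fin d → ℤ))))
  rw [hvs] at hbspan
  have hbsfin : bs.Finite := hbind.setFinite
  have : Fintype bs := hbsfin.fintype
  let bas : Module.Basis bs ℝ (Fin d → ℝ) :=
    Module.Basis.mk hbind (by rw [Subtype.range_coe]; exact hbspan.ge)
  have hcard : Fintype.card bs = d := by
    have h2 := Module.finrank_eq_card_basis bas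
    rw [Module.finrank_fin_fun] at h2
    exact h2.symm
  let eqv := Fintype.equivFinOfCardEq hcard
  let e : Module.Basis (Fin d) ℝ (Fin d → ℝ) := bas.reindex eqv
  have he : ∀ j, (e j : Fin d → ℝ) ∈ bs := by
    intro j
    have h3 : e j = bas (eqv.symm j) := bas.reindex_apply eqv j
    rw [h3, Module.Basis.mk_apply]
    exact (eqv.symm j).2
  have hechoose : ∀ j, ∃ v : Fin d → ℤ, v ∈ (V : Set (Fin d → ℤ)) ∧ toR v - toR v₀ = e j := by
    intro j
    obtain ⟨p, ⟨v, hv, rfl⟩, hpe⟩ := hbsub (he j)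
    exact ⟨v, hv, hpe⟩
  choose vint hvintV hvinte using hechoose
  set A : Matrix (Fin d) (Fin d) ℤ := Matrix.of (fun i j => vint j i - v₀ i) with hA
  set Aℝ : Matrix (Fin d) (Fin d) ℝ := A.map (Int.cast : ℤ → ℝ) with hAℝ
  have hAcol : ∀ i j, Aℝ i j = e j i := by
    intro i j
    have h4 := congrFun (hvinte j) i
    simp only [Pi.sub_apply, toR] at h4
    simp only [hAℝ, hA, Matrix.map_apply, Matrix.of_apply]
    push_cast
    linarith
  have hdetAℝ : IsUnit Aℝ.det := by
    have hM : (Pi.basisFun ℝ (Fin d)).toMatrix ⇑e = Aℝ := by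
      ext i j
      rw [Module.Basis.toMatrix_apply, Pi.basisFun_repr, hAcol]
    have h5 := (Pi.basisFun ℝ (Fin d)).isUnit_det e
    rwa [Module.Basis.det_apply, hM] at h5
  have hcast : ((A.det : ℤ) : ℝ) = Aℝ.det := by
    have h6 := RingHom.map_det (Int.castRingHom ℝ) A
    simpa [hAℝ] using h6
  have hdetA : A.det ≠ 0 := by
    intro h0
    rw [isUnit_iff_ne_zero] at hdetAℝ
    exact hdetAℝ (by rw [← hcast, h0, Int.cast_zero])
  -- the determinant bound machine
  have hdetbound : ∀ Bm : Matrix (Fin d) (Fin d) ℝ,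
      (∀ j, (toR v₀ + fun i => Bm i j) ∈ P) → |Bm.det| ≤ (KN : ℝ) := by
    intro Bm hj
    have h1 := simplex_vol hd Bm (toR v₀) P (convex_convexHull ℝ _)
      (subset_convexHull ℝ _ (Set.mem_image_of_mem toR hv₀V)) hj
    have h3 : |Bm.det| * (1/d)^d ≤ (volume P).toReal :=
      (ENNReal.ofReal_le_iff_le_toReal hPfin).mp h1
    have hd0 : (0:ℝ) < (d:ℝ) := by exact_mod_cast hd
    have hdp : (0:ℝ) < ((d:ℝ))^d := by positivity
    have hid : ((1:ℝ)/d)^d = ((d:ℝ)^d)⁻¹ := by rw [one_div, inv_pow]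
    have htr : (volume P).toReal ≤ (K:ℝ) := by
      have h0 : 0 ≤ (volume P).toReal := ENNReal.toReal_nonneg
      have hf1 : (1:ℝ) ≤ (Nat.factorial d : ℝ) := by
        exact_mod_cast Nat.one_le_iff_ne_zero.mpr (Nat.factorial_pos d).ne'
      nlinarith
    rw [hid] at h3
    rw [hKN]
    push_cast
    calc |Bm.det| = |Bm.det| * ((d:ℝ)^d)⁻¹ * (d:ℝ)^d := by field_simp
    _ ≤ (K:ℝ) * (d:ℝ)^d :=
        mul_le_mul_of_nonneg_right (h3.trans htr) hdp.le
  have hptA : ∀ j, (toR v₀ + fun i => Aℝ i j) ∈ P := by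
    intro j
    have h7 : (toR v₀ + fun i => Aℝ i j) = toR (vint j) := by
      funext i
      have h8 := congrFun (hvinte j) i
      simp only [Pi.sub_apply] at h8
      simp only [Pi.add_apply, hAcol]
      linarith
    rw [h7]
    exact subset_convexHull ℝ _ (Set.mem_image_of_mem toR (hvintV j))
  have hdetAbound : A.det.natAbs ≤ KN := by
    have h9 := hdetbound Aℝ hptA
    rw [← hcast, ← Int.cast_abs] at h9
    have h10 : |A.det| ≤ (KN : ℤ) := by exact_mod_cast h9
    rw [Int.abs_eq_natAbs] at h10
    exact_mod_cast h10
  have hrowS : rowLat A ∈ {L : Submodule ℤ (Fin d → ℤ) | ∀ z : Fin d → ℤ, (m:ℤ) • z ∈ L} := by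
    intro z
    have hpos : 0 < A.det.natAbs := Int.natAbs_pos.mpr hdetA
    obtain ⟨t, ht⟩ := Nat.dvd_factorial hpos hdetAbound
    have hnat : ((A.det.natAbs : ℤ)) • z ∈ rowLat A := by
      rcases Int.natAbs_eq A.det with hcase | hcase
      · rw [← hcase]; exact det_smul_mem_rowLat A z
      · have h11 : ((A.det.natAbs : ℤ)) = -A.det := by rw [hcase]; simp
        rw [h11, neg_smul]
        exact (rowLat A).neg_mem (det_smul_mem_rowLat A z)
    have h12 : ((m:ℕ) : ℤ) • z = (t:ℤ) • (((A.det.natAbs : ℤ)) • z) := by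
      rw [smul_smul]
      congr 1
      have h12' : m = A.det.natAbs * t := ht
      rw [h12']
      push_cast
      ring
    rw [h12]
    exact (rowLat A).smul_mem _ hnat
  have hex : ∃ Bm : Matrix (Fin d) (Fin d) ℤ, Bm.det ≠ 0 ∧ rowLat Bm = rowLat A :=
    ⟨A, hdetA, rfl⟩
  set B : Matrix (Fin d) (Fin d) ℤ := rep (rowLat A) with hBdef
  have hBspec : B.det ≠ 0 ∧ rowLat B = rowLat A := by
    rw [hBdef, hrep]
    simp only [dif_pos hex]
    exact hex.choose_spec
  have hBmem : B ∈ 𝓕 := by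
    rw [h𝓕, Set.Finite.mem_toFinset]
    exact ⟨rowLat A, hrowS, rfl⟩
  have hBbound : ∀ i j, (B i j).natAbs ≤ N₀ := by
    intro i j
    calc (B i j).natAbs ≤ Finset.univ.sup (fun j => (B i j).natAbs) :=
          Finset.le_sup (f := fun j => (B i j).natAbs) (Finset.mem_univ j)
    _ ≤ Finset.univ.sup (fun i => Finset.univ.sup fun j => (B i j).natAbs) :=
          Finset.le_sup (f := fun i => Finset.univ.sup fun j => (B i j).natAbs)
            (Finset.mem_univ i)
    _ ≤ N₀ := by
          rw [hN₀]
          exact Finset.le_sup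
            (f := fun Bm => Finset.univ.sup fun i => Finset.univ.sup fun j => (Bm i j).natAbs)
            hBmem
  obtain ⟨M, hMunit, hMB⟩ := exists_unimodular hdetA hBspec.2.symm
  set bvec : Fin d → ℤ := -(M.mulVec v₀) with hbvec
  have key : ∀ x : Fin d → ℤ, x ∈ (V : Set (Fin d → ℤ)) →
      ∀ i, |(M.mulVec x + bvec) i| ≤ (N:ℤ) := by
    intro x hxV
    set y : Fin d → ℝ := Aℝ⁻¹.mulVec (toR x - toR v₀) with hy
    have hAy : Aℝ.mulVec y = toR x - toR v₀ := by
      rw [hy, Matrix.mulVec_mulVec, Matrix.mul_nonsing_inv _ hdetAℝ, Matrix.one_mulVec]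
    have hyb : ∀ j, |y j| ≤ (KN : ℝ) := by
      intro j
      set Bm : Matrix (Fin d) (Fin d) ℝ := Aℝ.updateCol j (toR x - toR v₀) with hBm
      have hpts : ∀ k, (toR v₀ + fun i => Bm i k) ∈ P := by
        intro k
        by_cases hk : k = j
        · subst hk
          have h13 : (toR v₀ + fun i => Bm i k) = toR x := by
            funext i
            simp only [Pi.add_apply, hBm, Matrix.updateCol_apply, if_pos rfl,
              Pi.sub_apply, if_true]
            ring
          rw [h13]
          exact subset_convexHull ℝ _ (Set.mem_image_of_mem toR hxV)
        · have h14 : (toR v₀ + fun i => Bm i k) = toR (vint k) := by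
            funext i
            simp only [Pi.add_apply, hBm, Matrix.updateCol_apply, if_neg hk]
            have h15 := congrFun (hvinte k) i
            simp only [Pi.sub_apply] at h15
            rw [hAcol]
            linarith
          rw [h14]
          exact subset_convexHull ℝ _ (Set.mem_image_of_mem toR (hvintV k))
      have hb := hdetbound Bm hpts
      have hdet2 : Bm.det = Aℝ.det * y j := by
        rw [hBm, ← hAy, ← Matrix.cramer_apply, Matrix.cramer_eq_adjugate_mulVec,
          Matrix.mulVec_mulVec, Matrix.adjugate_mul, Matrix.smul_mulVec,
          Matrix.one_mulVec]
        rfl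
      have hdA1 : (1:ℝ) ≤ |Aℝ.det| := by
        rw [← hcast, ← Int.cast_abs]
        exact_mod_cast Int.one_le_abs hdetA
      calc |y j| ≤ |Aℝ.det| * |y j| := le_mul_of_one_le_left (abs_nonneg _) hdA1
      _ = |Bm.det| := by rw [hdet2, abs_mul]
      _ ≤ (KN:ℝ) := hb
    intro i
    have hcoord : (((M.mulVec x + bvec) i : ℤ) : ℝ) =
        ((B.map (Int.cast : ℤ → ℝ)).mulVec y) i := by
      have h16 : toR (M.mulVec x + bvec) =
          (M.map (Int.cast : ℤ → ℝ)).mulVec (toR x - toR v₀) := by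
        funext i'
        simp only [toR, hbvec, Pi.add_apply, Pi.neg_apply, Matrix.mulVec,
          dotProduct, Matrix.map_apply]
        push_cast
        simp only [Pi.sub_apply, toR, mul_sub]
        rw [Finset.sum_sub_distrib]
        ring
      have h17 : (B.map (Int.cast : ℤ → ℝ)) =
          (M.map (Int.cast : ℤ → ℝ)) * (A.map (Int.cast : ℤ → ℝ)) := by
        rw [hMB]
        ext i' j'
        simp only [Matrix.map_apply, Matrix.mul_apply]
        push_cast
        rfl
      have h18 := congrFun h16 i
      rw [← hAy] at h18
      rw [h17, ← Matrix.mulVec_mulVec]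
      exact h18
    have h19 : |((B.map (Int.cast : ℤ → ℝ)).mulVec y) i| ≤ (N:ℝ) := by
      have h20 : ((B.map (Int.cast : ℤ → ℝ)).mulVec y) i = ∑ j, (B i j : ℝ) * y j := by
        simp [Matrix.mulVec, dotProduct, Matrix.map_apply]
      rw [h20]
      calc |∑ j, (B i j : ℝ) * y j| ≤ ∑ j, |(B i j : ℝ) * y j| :=
            Finset.abs_sum_le_sum_abs _ _
      _ ≤ ∑ _j : Fin d, (N₀ : ℝ) * (KN : ℝ) := by
          refine Finset.sum_le_sum fun j _ => ?_
          rw [abs_mul]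
          refine mul_le_mul ?_ (hyb j) (abs_nonneg _) (by positivity)
          rw [← Int.cast_abs]
          have h21 : |B i j| ≤ (N₀ : ℤ) := by
            rw [Int.abs_eq_natAbs]
            exact_mod_cast hBbound i j
          exact_mod_cast h21
      _ = (N : ℝ) := by
          rw [Finset.sum_const, Finset.card_univ, Fintype.card_fin, nsmul_eq_mul, hN]
          push_cast
          ring
    rw [← hcoord] at h19
    exact_mod_cast h19
  refine ⟨V.image (fun x => M.mulVec x + bvec), ?_, M, bvec, hMunit, ?_⟩
  · rw [Finset.mem_powerset]
    intro w hw
    rw [Finset.mem_image] at hw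
    obtain ⟨x, hxV, rfl⟩ := hw
    rw [Finset.mem_Icc]
    constructor
    · intro i
      have := key x hxV i
      have h22 := (abs_le.mp this).1
      exact h22
    · intro i
      exact (abs_le.mp (key x hxV i)).2
  · rw [Finset.coe_image, Set.image_image]
end

section
/- A Lawrence prism P in ℝ^d with heights a₀, …, a_{d-1} (nonnegative integers, not all zero) satisfies |P ∩ ℤ^d| = d + Vol(P), where Vol denotes normalized volume; moreover Vol(P) = a₀ + a₁ + ⋯ + a_{d-1}. -/
open MeasureTheory Finset

namespace LP

def Tset (n : ℕ) (r : ℝ) : Set (Fin n → ℝ) := {y | (∀ j, 0 ≤ y j) ∧ ∑ j, y j ≤ r}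

lemma measurableSet_Tset (n : ℕ) (r : ℝ) : MeasurableSet (Tset n r) := by
  have h1 : MeasurableSet {y : Fin n → ℝ | ∀ j, 0 ≤ y j} := by
    rw [Set.setOf_forall]
    exact MeasurableSet.iInter fun j =>
      measurableSet_le measurable_const (measurable_pi_apply j)
  have h2 : MeasurableSet {y : Fin n → ℝ | ∑ j, y j ≤ r} :=
    measurableSet_le (Finset.measurable_sum _ fun j _ => measurable_pi_apply j) measurable_const
  exact h1.inter h2

lemma Tset_empty {n : ℕ} {r : ℝ} (hr : r < 0) : Tset n r = ∅ := by
  ext y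
  simp only [Tset, Set.mem_setOf_eq, Set.mem_empty_iff_false, iff_false, not_and]
  intro h1 h2
  exact absurd ((Finset.sum_nonneg fun j _ => h1 j).trans h2) (not_le.2 hr)

lemma aux_nonneg (n : ℕ) (c W q t : ℝ) (hc : 0 ≤ c) (hq : 0 ≤ q)
    (hs : 0 ≤ n * c + W * t) :
    0 ≤ c * q / n.factorial + W * (q * t) / (n + 1).factorial := by
  have h0 : (n.factorial : ℝ) ≠ 0 := by positivity
  have hfac : ((n + 1).factorial : ℝ) = (n + 1) * n.factorial := by
    exact_mod_cast Nat.factorial_succ n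
  have key : c * q / n.factorial + W * (q * t) / (n + 1).factorial =
      q * ((n + 1) * c + W * t) / ((n + 1).factorial) := by
    rw [hfac]; field_simp
  rw [key]
  apply div_nonneg _ (by positivity)
  exact mul_nonneg hq (by linarith)

lemma pow_int (r : ℝ) (k : ℕ) : ∫ s in (0:ℝ)..r, (r - s) ^ k = r ^ (k + 1) / (k + 1) := by
  rw [intervalIntegral.integral_comp_sub_left (fun u : ℝ => u ^ k) r]
  simp [integral_pow]

lemma master (n : ℕ) : ∀ (r c : ℝ) (w : Fin n → ℝ), 0 ≤ r → 0 ≤ c →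
    (∀ j, 0 ≤ c + w j * r) →
    ∫⁻ y in Tset n r, ENNReal.ofReal (c + ∑ j, w j * y j) =
      ENNReal.ofReal (c * r ^ n / n.factorial +
        (∑ j, w j) * r ^ (n + 1) / (n + 1).factorial) := by
  induction n with
  | zero =>
    intro r c w hr hc hw
    have hT : Tset 0 r = Set.univ := by
      ext y; simp [Tset, hr]
    rw [hT, Measure.restrict_univ]
    simp only [Finset.univ_eq_empty, Finset.sum_empty, add_zero, zero_mul, pow_zero]
    rw [lintegral_const, volume_pi, Measure.pi_univ]
    simp [Nat.factorial]
  | succ n IH =>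
    intro r c w hr hc hw
    set wl := w (Fin.last n) with hwl
    set W := ∑ j : Fin n, w (Fin.castSucc j) with hWdef
    -- endpoint nonnegativity facts
    have hc' : ∀ s : ℝ, 0 ≤ s → s ≤ r → 0 ≤ c + wl * s := by
      intro s hs0 hsr
      rcases eq_or_lt_of_le hr with h | h
      · have hs : s = 0 := le_antisymm (h ▸ hsr) hs0
        simpa [hs] using hc
      · have h1 := mul_nonneg hs0 (hw (Fin.last n))
        have h2 := mul_nonneg (sub_nonneg.2 hsr) hc
        have key : 0 ≤ r * (c + wl * s) := by nlinarith
        exact (mul_nonneg_iff_of_pos_left h).1 key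
    have hw' : ∀ s : ℝ, 0 ≤ s → s ≤ r → ∀ j : Fin n,
        0 ≤ (c + wl * s) + w (Fin.castSucc j) * (r - s) := by
      intro s hs0 hsr j
      rcases eq_or_lt_of_le hr with h | h
      · have hs : s = 0 := le_antisymm (h ▸ hsr) hs0
        have : r = 0 := h.symm
        simp [hs, this]; exact hc
      · have h1 := mul_nonneg hs0 (hw (Fin.last n))
        have h2 := mul_nonneg (sub_nonneg.2 hsr) (hw (Fin.castSucc j))
        have key : 0 ≤ r * ((c + wl * s) + w (Fin.castSucc j) * (r - s)) := by nlinarith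
        exact (mul_nonneg_iff_of_pos_left h).1 key
    -- the product-space set and function
    set S' : Set (ℝ × (Fin n → ℝ)) :=
      {z | (∀ j, 0 ≤ z.2 j) ∧ 0 ≤ z.1 ∧ z.1 + ∑ j, z.2 j ≤ r} with hS'def
    have hS'm : MeasurableSet S' := by
      have h1 : MeasurableSet {z : ℝ × (Fin n → ℝ) | ∀ j, 0 ≤ z.2 j} := by
        rw [Set.setOf_forall]
        exact MeasurableSet.iInter fun j =>
          measurableSet_le measurable_const (measurable_snd.eval)
      have h2 : MeasurableSet {z : ℝ × (Fin n → ℝ) | 0 ≤ z.1} :=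
        measurableSet_le measurable_const measurable_fst
      have h3 : MeasurableSet {z : ℝ × (Fin n → ℝ) | z.1 + ∑ j, z.2 j ≤ r} :=
        measurableSet_le (measurable_fst.add
          (Finset.measurable_sum _ fun j _ => measurable_snd.eval))
          measurable_const
      exact h1.inter (h2.inter h3)
    set f : ℝ × (Fin n → ℝ) → ENNReal :=
      S'.indicator (fun z =>
        ENNReal.ofReal ((c + wl * z.1) + ∑ j : Fin n, w (Fin.castSucc j) * z.2 j)) with hfdef
    have hfm : Measurable f := by
      apply Measurable.indicator _ hS'm
      apply ENNReal.measurable_ofReal.comp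
      exact (measurable_const.add (measurable_fst.const_mul wl)).add
        (Finset.measurable_sum _ fun j _ => (measurable_snd.eval).const_mul _)
    set e := MeasurableEquiv.piFinSuccAbove (fun _ : Fin (n+1) => ℝ) (Fin.last n) with hedef
    have hmp := volume_preserving_piFinSuccAbove (fun _ : Fin (n+1) => ℝ) (Fin.last n)
    have hex : ∀ x : Fin (n+1) → ℝ, e x = (x (Fin.last n), fun j => x (Fin.castSucc j)) := by
      intro x
      simp [hedef, MeasurableEquiv.piFinSuccAbove_apply, Fin.removeNth, Fin.succAbove_last]
      rfl
    have hmem : ∀ x : Fin (n+1) → ℝ, x ∈ Tset (n+1) r ↔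
        ((x (Fin.last n), fun j => x (Fin.castSucc j)) : ℝ × (Fin n → ℝ)) ∈ S' := by
      intro x
      simp only [Tset, hS'def, Set.mem_setOf_eq]
      constructor
      · rintro ⟨h1, h2⟩
        refine ⟨fun j => h1 _, h1 _, ?_⟩
        rw [Fin.sum_univ_castSucc] at h2; linarith
      · rintro ⟨h1, h2, h3⟩
        refine ⟨fun j => ?_, ?_⟩
        · induction j using Fin.lastCases with
          | last => exact h2
          | cast j => exact h1 j
        · rw [Fin.sum_univ_castSucc]; linarith
    have key1 : ∀ x : Fin (n+1) → ℝ,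
        (Tset (n+1) r).indicator (fun y => ENNReal.ofReal (c + ∑ j, w j * y j)) x = f (e x) := by
      intro x
      rw [hex x]
      by_cases hx : x ∈ Tset (n+1) r
      · rw [Set.indicator_of_mem hx, hfdef, Set.indicator_of_mem ((hmem x).1 hx)]
        congr 1
        rw [Fin.sum_univ_castSucc]
        ring
      · rw [Set.indicator_of_notMem hx, hfdef,
          Set.indicator_of_notMem (fun h => hx ((hmem x).2 h))]
    -- the inner integral
    have inner : ∀ s : ℝ, (∫⁻ y' : Fin n → ℝ, f (s, y')) =
        (Set.Icc 0 r).indicator (fun s => ENNReal.ofReal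
          ((c + wl * s) * (r - s) ^ n / n.factorial +
            W * (r - s) ^ (n + 1) / (n + 1).factorial)) s := by
      intro s
      by_cases hs0 : 0 ≤ s
      · have hfs : ∀ y' : Fin n → ℝ, f (s, y') =
            (Tset n (r - s)).indicator (fun y' =>
              ENNReal.ofReal ((c + wl * s) + ∑ j, w (Fin.castSucc j) * y' j)) y' := by
          intro y'
          by_cases hy : y' ∈ Tset n (r - s)
          · have hmem2 : ((s, y') : ℝ × (Fin n → ℝ)) ∈ S' :=
              ⟨hy.1, hs0, by have := hy.2; linarith⟩
            rw [hfdef, Set.indicator_of_mem hmem2, Set.indicator_of_mem hy]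
          · have hmem2 : ((s, y') : ℝ × (Fin n → ℝ)) ∉ S' := by
              intro hz
              exact hy ⟨hz.1, by have := hz.2.2; linarith⟩
            rw [hfdef, Set.indicator_of_notMem hmem2, Set.indicator_of_notMem hy]
        rw [lintegral_congr hfs]
        by_cases hsr : s ≤ r
        · rw [lintegral_indicator (measurableSet_Tset _ _)]
          rw [IH (r - s) (c + wl * s) (fun j => w (Fin.castSucc j)) (by linarith)
            (hc' s hs0 hsr) (by intro j; have := hw' s hs0 hsr j; linarith)]
          rw [Set.indicator_of_mem (Set.mem_Icc.2 ⟨hs0, hsr⟩)]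
        · have hTe : Tset n (r - s) = ∅ := Tset_empty (by linarith)
          rw [hTe]
          simp only [Set.indicator_empty, lintegral_zero]
          rw [Set.indicator_of_notMem (by simp [Set.mem_Icc]; intro; linarith)]
      · have hz : ∀ y' : Fin n → ℝ, f (s, y') = 0 := by
          intro y'
          rw [hfdef]
          exact Set.indicator_of_notMem (fun hz => hs0 hz.2.1) _
        simp only [hz, lintegral_zero]
        rw [Set.indicator_of_notMem (by simp [Set.mem_Icc]; intro h; exact absurd h hs0)]
    -- assemble
    rw [← lintegral_indicator (measurableSet_Tset (n+1) r)]
    calc ∫⁻ x, (Tset (n+1) r).indicator (fun y => ENNReal.ofReal (c + ∑ j, w j * y j)) x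
        = ∫⁻ x, f (e x) := lintegral_congr key1
      _ = ∫⁻ z, f z := hmp.lintegral_comp hfm
      _ = ∫⁻ s : ℝ, ∫⁻ y' : Fin n → ℝ, f (s, y') := by
          rw [Measure.volume_eq_prod, lintegral_prod _ hfm.aemeasurable]
      _ = ∫⁻ s : ℝ, (Set.Icc 0 r).indicator (fun s => ENNReal.ofReal
            ((c + wl * s) * (r - s) ^ n / n.factorial +
              W * (r - s) ^ (n + 1) / (n + 1).factorial)) s := lintegral_congr inner
      _ = ENNReal.ofReal (c * r ^ (n+1) / (n+1).factorial +
            (∑ j, w j) * r ^ (n + 2) / (n + 2).factorial) := ?_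
    rw [lintegral_indicator measurableSet_Icc]
    have hcont : Continuous (fun s : ℝ => (c + wl * s) * (r - s) ^ n / n.factorial +
        W * (r - s) ^ (n + 1) / (n + 1).factorial) := by fun_prop
    have hint : IntegrableOn (fun s : ℝ => (c + wl * s) * (r - s) ^ n / n.factorial +
        W * (r - s) ^ (n + 1) / (n + 1).factorial) (Set.Icc 0 r) := hcont.integrableOn_Icc
    have hnn : 0 ≤ᵐ[volume.restrict (Set.Icc 0 r)] fun s : ℝ =>
        (c + wl * s) * (r - s) ^ n / n.factorial +
          W * (r - s) ^ (n + 1) / (n + 1).factorial := by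
      refine (ae_restrict_iff' measurableSet_Icc).2 (ae_of_all _ fun s hs => ?_)
      obtain ⟨hs0, hsr⟩ := Set.mem_Icc.1 hs
      have h1 := hc' s hs0 hsr
      have hsum : 0 ≤ (n : ℝ) * (c + wl * s) + W * (r - s) := by
        have hkey := Finset.sum_nonneg (fun j (_ : j ∈ (univ : Finset (Fin n))) =>
          hw' s hs0 hsr j)
        rw [Finset.sum_add_distrib, Finset.sum_const, card_univ, Fintype.card_fin,
          ← Finset.sum_mul] at hkey
        rw [hWdef]
        simp only [nsmul_eq_mul] at hkey
        linarith
      have := aux_nonneg n (c + wl * s) W ((r - s) ^ n) (r - s) h1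
        (pow_nonneg (by linarith) n) hsum
      simpa [pow_succ] using this
    rw [← ofReal_integral_eq_lintegral_ofReal hint hnn]
    congr 1
    rw [MeasureTheory.integral_Icc_eq_integral_Ioc, ← intervalIntegral.integral_of_le hr]
    have h0 : (n.factorial : ℝ) ≠ 0 := by positivity
    have h1 : ((n + 1).factorial : ℝ) ≠ 0 := by positivity
    set A := (c + wl * r) / n.factorial with hA
    set B := W / (n + 1).factorial - wl / n.factorial with hB
    have hXAB : Set.EqOn (fun s : ℝ => (c + wl * s) * (r - s) ^ n / n.factorial +
        W * (r - s) ^ (n + 1) / (n + 1).factorial)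
        (fun s : ℝ => A * (r - s) ^ n + B * (r - s) ^ (n + 1)) (Set.uIcc 0 r) := by
      intro s _
      simp only [hA, hB]
      field_simp
      ring
    rw [intervalIntegral.integral_congr hXAB]
    rw [intervalIntegral.integral_add
      ((Continuous.intervalIntegrable (by fun_prop) _ _))
      ((Continuous.intervalIntegrable (by fun_prop) _ _))]
    rw [intervalIntegral.integral_const_mul, intervalIntegral.integral_const_mul,
      pow_int, pow_int]
    rw [Fin.sum_univ_castSucc]
    have f2 : ((n + 1).factorial : ℝ) = (n + 1) * n.factorial := by
      exact_mod_cast Nat.factorial_succ n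
    have f3 : ((n + 2).factorial : ℝ) = (n + 2) * (n + 1).factorial := by
      exact_mod_cast Nat.factorial_succ (n + 1)
    rw [hA, hB, ← hWdef, ← hwl]
    push_cast
    rw [f2, f3, f2]
    field_simp
    ring


lemma piFinSuccAbove_last_apply (n : ℕ) (x : Fin (n + 1) → ℝ) :
    (MeasurableEquiv.piFinSuccAbove (fun _ : Fin (n + 1) => ℝ) (Fin.last n)) x =
      (x (Fin.last n), fun j => x (Fin.castSucc j)) := by
  simp [MeasurableEquiv.piFinSuccAbove_apply, Fin.removeNth, Fin.succAbove_last]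
  rfl

def g {n : ℕ} (a : Fin (n + 1) → ℕ) (y : Fin n → ℝ) : ℝ :=
  (a 0 : ℝ) + ∑ j : Fin n, ((a j.succ : ℝ) - (a 0 : ℝ)) * y j

def Sset {n : ℕ} (a : Fin (n + 1) → ℕ) : Set (Fin (n + 1) → ℝ) :=
  {x | (∀ j : Fin n, 0 ≤ x j.castSucc) ∧ (∑ j : Fin n, x j.castSucc) ≤ 1 ∧
    0 ≤ x (Fin.last n) ∧ x (Fin.last n) ≤ g a (fun j => x j.castSucc)}

lemma volume_Sset (n : ℕ) (a : Fin (n + 1) → ℕ) :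
    volume (Sset a) = ENNReal.ofReal ((∑ i, (a i : ℝ)) / (n + 1).factorial) := by
  set e := MeasurableEquiv.piFinSuccAbove (fun _ : Fin (n + 1) => ℝ) (Fin.last n) with hedef
  have hmp := volume_preserving_piFinSuccAbove (fun _ : Fin (n + 1) => ℝ) (Fin.last n)
  set S' : Set (ℝ × (Fin n → ℝ)) :=
    {z | (∀ j, 0 ≤ z.2 j) ∧ (∑ j, z.2 j) ≤ 1 ∧ 0 ≤ z.1 ∧ z.1 ≤ g a z.2} with hS'def
  have hgc : Continuous (g a) := by unfold g; fun_prop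
  have hgm : Measurable fun z : ℝ × (Fin n → ℝ) => g a z.2 := hgc.measurable.comp measurable_snd
  have hS'm : MeasurableSet S' := by
    have h1 : MeasurableSet {z : ℝ × (Fin n → ℝ) | ∀ j, 0 ≤ z.2 j} := by
      rw [Set.setOf_forall]
      exact MeasurableSet.iInter fun j =>
        measurableSet_le measurable_const measurable_snd.eval
    have h2 : MeasurableSet {z : ℝ × (Fin n → ℝ) | ∑ j, z.2 j ≤ 1} :=
      measurableSet_le (Finset.measurable_sum _ fun j _ =>
        (measurable_snd.eval : Measurable fun z : ℝ × (Fin n → ℝ) => z.2 j)) measurable_const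
    have h3 : MeasurableSet {z : ℝ × (Fin n → ℝ) | 0 ≤ z.1} :=
      measurableSet_le measurable_const measurable_fst
    have h4 : MeasurableSet {z : ℝ × (Fin n → ℝ) | z.1 ≤ g a z.2} :=
      measurableSet_le measurable_fst hgm
    exact h1.inter (h2.inter (h3.inter h4))
  have hpre : Sset a = e ⁻¹' S' := by
    ext x
    rw [Set.mem_preimage, hedef, piFinSuccAbove_last_apply]
    simp only [Sset, hS'def, Set.mem_setOf_eq]
  have slice : ∀ y : Fin n → ℝ, volume ((fun s => (s, y)) ⁻¹' S') =
      (Tset n 1).indicator (fun y => ENNReal.ofReal (g a y)) y := by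
    intro y
    by_cases hy : y ∈ Tset n 1
    · have hseteq : (fun s => (s, y)) ⁻¹' S' = Set.Icc 0 (g a y) := by
        ext s
        simp only [hS'def, Set.mem_preimage, Set.mem_setOf_eq, Set.mem_Icc]
        exact ⟨fun h => ⟨h.2.2.1, h.2.2.2⟩, fun h => ⟨hy.1, hy.2, h.1, h.2⟩⟩
      rw [hseteq, Real.volume_Icc, Set.indicator_of_mem hy, sub_zero]
    · have hseteq : (fun s => (s, y)) ⁻¹' S' = ∅ := by
        ext s
        simp only [hS'def, Set.mem_preimage, Set.mem_setOf_eq, Set.mem_empty_iff_false,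
          iff_false, not_and]
        intro h1 h2
        exact absurd ⟨h1, h2⟩ hy
      rw [hseteq, measure_empty, Set.indicator_of_notMem hy]
  calc volume (Sset a) = volume (e ⁻¹' S') := by rw [hpre]
    _ = volume S' := hmp.measure_preimage hS'm.nullMeasurableSet
    _ = ∫⁻ y, volume ((fun s => (s, y)) ⁻¹' S') := by
        rw [Measure.volume_eq_prod, Measure.prod_apply_symm hS'm]
    _ = ∫⁻ y, (Tset n 1).indicator (fun y => ENNReal.ofReal (g a y)) y := lintegral_congr slice
    _ = ∫⁻ y in Tset n 1, ENNReal.ofReal (g a y) := lintegral_indicator (measurableSet_Tset n 1) _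
    _ = ENNReal.ofReal ((a 0 : ℝ) * 1 ^ n / n.factorial +
          (∑ j : Fin n, ((a j.succ : ℝ) - (a 0 : ℝ))) * 1 ^ (n + 1) / (n + 1).factorial) := by
        exact master n 1 (a 0) (fun j => (a j.succ : ℝ) - (a 0 : ℝ)) zero_le_one
          (Nat.cast_nonneg _) (fun j => by
            have := Nat.cast_nonneg (α := ℝ) (a j.succ)
            simp only [mul_one]
            linarith)
    _ = ENNReal.ofReal ((∑ i, (a i : ℝ)) / (n + 1).factorial) := by
        congr 1
        rw [Fin.sum_univ_succ (f := fun i => (a i : ℝ))]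
        rw [Finset.sum_sub_distrib, Finset.sum_const, card_univ, Fintype.card_fin,
          nsmul_eq_mul]
        have f2 : ((n + 1).factorial : ℝ) = (n + 1) * n.factorial := by
          exact_mod_cast Nat.factorial_succ n
        have h0 : (n.factorial : ℝ) ≠ 0 := by positivity
        rw [one_pow, one_pow, f2]
        field_simp
        ring


lemma sum_ind {n : ℕ} (j : Fin n) (v : Fin (n + 1) → ℝ) :
    ∑ i : Fin (n + 1), (if (j : ℕ) + 1 = (i : ℕ) then v i else 0) = v j.succ := by
  have h : ∀ i : Fin (n + 1), ((j : ℕ) + 1 = (i : ℕ)) ↔ (i = j.succ) := fun i => by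
    rw [Fin.ext_iff, Fin.val_succ, eq_comm]
  simp_rw [h]
  simp

lemma sum_ind2 {n : ℕ} (i0 : Fin n) (v : Fin n → ℝ) :
    ∑ j : Fin n, (if (j : ℕ) + 1 = (i0 : ℕ) + 1 then v j else 0) = v i0 := by
  have h : ∀ j : Fin n, ((j : ℕ) + 1 = (i0 : ℕ) + 1) ↔ (j = i0) := fun j => by
    rw [Fin.ext_iff]; omega
  simp_rw [h]
  simp

lemma g_combo {n : ℕ} (a : Fin (n + 1) → ℕ) (α β : ℝ) (hαβ : α + β = 1)
    (u v : Fin n → ℝ) :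
    g a (fun j => α * u j + β * v j) = α * g a u + β * g a v := by
  unfold g
  have h : ∀ j : Fin n, ((a j.succ : ℝ) - a 0) * (α * u j + β * v j) =
      α * (((a j.succ : ℝ) - a 0) * u j) + β * (((a j.succ : ℝ) - a 0) * v j) :=
    fun j => by ring
  rw [Finset.sum_congr rfl fun j _ => h j, Finset.sum_add_distrib, ← Finset.mul_sum,
    ← Finset.mul_sum]
  linear_combination (-(a 0 : ℝ)) * hαβ

lemma g_vertex0 {n : ℕ} (a : Fin (n + 1) → ℕ) :
    g a (fun _ => 0) = (a 0 : ℝ) := by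
  simp [g]

lemma g_vertex {n : ℕ} (a : Fin (n + 1) → ℕ) (i0 : Fin n) :
    g a (fun j => if j = i0 then (1 : ℝ) else 0) = (a i0.succ : ℝ) := by
  unfold g
  have h : ∀ j : Fin n, ((a j.succ : ℝ) - a 0) * (if j = i0 then (1:ℝ) else 0) =
      if j = i0 then ((a j.succ : ℝ) - a 0) else 0 := fun j => by split <;> simp
  rw [Finset.sum_congr rfl fun j _ => h j, Finset.sum_ite_eq' univ i0]
  simp

lemma hull_eq (n : ℕ) (a : Fin (n + 1) → ℕ) :
    convexHull ℝ
      (Set.range (fun (i j : Fin (n + 1)) => if (j : ℕ) + 1 = (i : ℕ) then (1 : ℝ) else 0) ∪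
       Set.range (fun (i j : Fin (n + 1)) =>
        (if (j : ℕ) + 1 = (i : ℕ) then (1 : ℝ) else 0) +
        (if (j : ℕ) = n then (a i : ℝ) else 0))) = Sset a := by
  set B : Fin (n + 1) → Fin (n + 1) → ℝ :=
    fun i j => if (j : ℕ) + 1 = (i : ℕ) then (1 : ℝ) else 0 with hBdef
  set U : Fin (n + 1) → Fin (n + 1) → ℝ :=
    fun i j => (if (j : ℕ) + 1 = (i : ℕ) then (1 : ℝ) else 0) +
      (if (j : ℕ) = n then (a i : ℝ) else 0) with hUdef
  -- coordinate facts
  have hBlast : ∀ i, B i (Fin.last n) = 0 := by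
    intro i
    simp only [hBdef, Fin.val_last]
    rw [if_neg]
    have := i.isLt; omega
  have hUlast : ∀ i, U i (Fin.last n) = (a i : ℝ) := by
    intro i
    simp only [hUdef, Fin.val_last]
    rw [if_neg (by have := i.isLt; omega)]
    simp
  have hBcast : ∀ i (j : Fin n), B i (Fin.castSucc j) =
      if (j : ℕ) + 1 = (i : ℕ) then (1 : ℝ) else 0 := by
    intro i j
    simp only [hBdef, Fin.coe_castSucc]
  have hUcast : ∀ i (j : Fin n), U i (Fin.castSucc j) = B i (Fin.castSucc j) := by
    intro i j
    simp only [hUdef, hBdef, Fin.coe_castSucc]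
    rw [if_neg (Nat.ne_of_lt j.isLt), add_zero]
  -- membership of the vertices
  have hBmem : ∀ i, B i ∈ Sset a := by
    intro i
    induction i using Fin.cases with
    | zero =>
      refine ⟨fun j => ?_, ?_, ?_, ?_⟩
      · rw [hBcast]; split <;> norm_num
      · have hz : ∀ j : Fin n, B 0 (Fin.castSucc j) = 0 := by
          intro j; rw [hBcast, if_neg (by simp)]
        simp [hz]
      · rw [hBlast]
      · rw [hBlast]
        have hz : ∀ j : Fin n, B 0 (Fin.castSucc j) = 0 := by
          intro j; rw [hBcast, if_neg (by simp)]
        simp only [hz]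
        rw [g_vertex0]
        positivity
    | succ i0 =>
      have hval : ∀ j : Fin n, B i0.succ (Fin.castSucc j) = if j = i0 then (1:ℝ) else 0 := by
        intro j
        rw [hBcast]
        congr 1
        simp only [Fin.val_succ, eq_iff_iff]
        rw [Fin.ext_iff]; omega
      refine ⟨fun j => ?_, ?_, ?_, ?_⟩
      · rw [hval]; split <;> norm_num
      · simp only [hval]
        rw [Finset.sum_ite_eq' univ i0]
        simp
      · rw [hBlast]
      · rw [hBlast]
        simp only [hval]
        rw [g_vertex]
        positivity
  have hUmem : ∀ i, U i ∈ Sset a := by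
    intro i
    obtain ⟨h1, h2, _, _⟩ := hBmem i
    have hgle : (a i : ℝ) ≤ g a (fun j => U i (Fin.castSucc j)) := by
      simp only [hUcast]
      induction i using Fin.cases with
      | zero =>
        have hz : ∀ j : Fin n, B 0 (Fin.castSucc j) = 0 := by
          intro j; rw [hBcast, if_neg (by simp)]
        simp only [hz]
        rw [g_vertex0]
      | succ i0 =>
        have hval : ∀ j : Fin n, B i0.succ (Fin.castSucc j) = if j = i0 then (1:ℝ) else 0 := by
          intro j
          rw [hBcast]
          congr 1
          simp only [Fin.val_succ, eq_iff_iff]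
          rw [Fin.ext_iff]; omega
        simp only [hval]
        rw [g_vertex]
    refine ⟨fun j => ?_, ?_, ?_, ?_⟩
    · rw [hUcast]; exact h1 j
    · simp only [hUcast]; exact h2
    · rw [hUlast]; positivity
    · rw [hUlast]; exact hgle
  -- direction ⊆
  apply le_antisymm
  · apply convexHull_min
    · rintro x (⟨i, rfl⟩ | ⟨i, rfl⟩)
      · exact hBmem i
      · exact hUmem i
    · rintro u hu v hv α β hα hβ hαβ
      obtain ⟨hu1, hu2, hu3, hu4⟩ := hu
      obtain ⟨hv1, hv2, hv3, hv4⟩ := hv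
      have happ : ∀ j : Fin (n+1), (α • u + β • v) j = α * u j + β * v j := fun j => rfl
      refine ⟨fun j => ?_, ?_, ?_, ?_⟩
      · rw [happ]
        exact add_nonneg (mul_nonneg hα (hu1 j)) (mul_nonneg hβ (hv1 j))
      · simp only [happ]
        rw [Finset.sum_add_distrib, ← Finset.mul_sum, ← Finset.mul_sum]
        have c1 : α * (∑ j : Fin n, u (Fin.castSucc j)) ≤ α * 1 :=
          mul_le_mul_of_nonneg_left hu2 hα
        have c2 : β * (∑ j : Fin n, v (Fin.castSucc j)) ≤ β * 1 :=
          mul_le_mul_of_nonneg_left hv2 hβ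
        linarith
      · rw [happ]
        exact add_nonneg (mul_nonneg hα hu3) (mul_nonneg hβ hv3)
      · simp only [happ]
        have := g_combo a α β hαβ (fun j => u (Fin.castSucc j)) (fun j => v (Fin.castSucc j))
        rw [this]
        exact add_le_add (mul_le_mul_of_nonneg_left hu4 hα) (mul_le_mul_of_nonneg_left hv4 hβ)
  -- direction ⊇
  · intro x hx
    obtain ⟨h1, h2, h3, h4⟩ := hx
    set lam : Fin (n+1) → ℝ :=
      Fin.cons (1 - ∑ j : Fin n, x (Fin.castSucc j)) (fun j => x (Fin.castSucc j)) with hlam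
    have hlam0 : lam 0 = 1 - ∑ j : Fin n, x (Fin.castSucc j) := rfl
    have hlams : ∀ j : Fin n, lam j.succ = x (Fin.castSucc j) := fun j => by
      simp [hlam]
    have hlam_nonneg : ∀ i, 0 ≤ lam i := by
      intro i
      induction i using Fin.cases with
      | zero => rw [hlam0]; linarith
      | succ j => rw [hlams]; exact h1 j
    have hlam_sum : ∑ i, lam i = 1 := by
      rw [Fin.sum_univ_succ, hlam0]
      simp only [hlams]
      ring
    set H := g a (fun j => x (Fin.castSucc j)) with hH
    have hH0 : 0 ≤ H := le_trans h3 h4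
    have hHlam : ∑ i, lam i * (a i : ℝ) = H := by
      rw [Fin.sum_univ_succ, hlam0]
      simp only [hlams, hH]
      unfold g
      have expand : ∑ j : Fin n, ((a j.succ : ℝ) - a 0) * x (Fin.castSucc j) =
          (∑ j : Fin n, x (Fin.castSucc j) * (a j.succ : ℝ)) -
            (a 0 : ℝ) * ∑ j : Fin n, x (Fin.castSucc j) := by
        rw [Finset.mul_sum, ← Finset.sum_sub_distrib]
        exact Finset.sum_congr rfl fun j _ => by ring
      rw [expand]
      ring
    set t : ℝ := if H = 0 then 0 else x (Fin.last n) / H with ht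
    have ht0 : 0 ≤ t := by
      rw [ht]; split
      · exact le_refl 0
      · exact div_nonneg h3 hH0
    have ht1 : t ≤ 1 := by
      rw [ht]; split
      · exact zero_le_one
      · rename_i hz
        exact (div_le_one (lt_of_le_of_ne hH0 (Ne.symm hz))).2 h4
    have htH : t * H = x (Fin.last n) := by
      by_cases hz : H = 0
      · rw [ht, if_pos hz, zero_mul]
        exact (le_antisymm (hz ▸ h4) h3).symm
      · rw [ht, if_neg hz]
        exact div_mul_cancel₀ _ hz
    set b : Fin (n+1) → ℝ := ∑ i, lam i • B i with hb
    set w : Fin (n+1) → ℝ := ∑ i, lam i • U i with hw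
    have hbmem : b ∈ convexHull ℝ (Set.range B ∪ Set.range U) :=
      (convex_convexHull ℝ _).sum_mem (fun i _ => hlam_nonneg i) hlam_sum
        (fun i _ => subset_convexHull _ _ (Or.inl ⟨i, rfl⟩))
    have hwmem : w ∈ convexHull ℝ (Set.range B ∪ Set.range U) :=
      (convex_convexHull ℝ _).sum_mem (fun i _ => hlam_nonneg i) hlam_sum
        (fun i _ => subset_convexHull _ _ (Or.inr ⟨i, rfl⟩))
    have hbapp : ∀ j', b j' = ∑ i, lam i * B i j' := by
      intro j'
      rw [hb, Finset.sum_apply]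
      rfl
    have hwapp : ∀ j', w j' = ∑ i, lam i * U i j' := by
      intro j'
      rw [hw, Finset.sum_apply]
      rfl
    have hx_eq : x = (1 - t) • b + t • w := by
      funext j'
      have happ : ((1 - t) • b + t • w) j' = (1 - t) * b j' + t * w j' := rfl
      rw [happ, hbapp, hwapp]
      induction j' using Fin.lastCases with
      | last =>
        have hB0 : ∑ i, lam i * B i (Fin.last n) = 0 := by
          simp only [hBlast, mul_zero, Finset.sum_const_zero]
        have hU0 : ∑ i, lam i * U i (Fin.last n) = H := by
          simp only [hUlast]
          exact hHlam
        rw [hB0, hU0, mul_zero, zero_add, htH]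
      | cast j =>
        have hBj : ∑ i, lam i * B i (Fin.castSucc j) = x (Fin.castSucc j) := by
          simp only [hBcast, mul_ite, mul_one, mul_zero]
          rw [sum_ind j lam]
          exact hlams j
        have hUj : ∑ i, lam i * U i (Fin.castSucc j) = x (Fin.castSucc j) := by
          simp only [hUcast]
          exact hBj
        rw [hBj, hUj]
        ring
    rw [hx_eq]
    exact (convex_convexHull ℝ _) hbmem hwmem (by linarith) ht0 (by ring)


def F {n : ℕ} (i : Fin (n + 1)) (k : ℕ) : Fin (n + 1) → ℤ :=
  fun j => (if (j : ℕ) + 1 = (i : ℕ) then 1 else 0) + (if j = Fin.last n then (k : ℤ) else 0)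

lemma F_cast {n : ℕ} (i : Fin (n + 1)) (k : ℕ) (j : Fin n) :
    F i k (Fin.castSucc j) = if (j : ℕ) + 1 = (i : ℕ) then 1 else 0 := by
  unfold F
  rw [if_neg (Fin.ne_of_lt (Fin.castSucc_lt_last j)), add_zero, Fin.coe_castSucc]

lemma F_last {n : ℕ} (i : Fin (n + 1)) (k : ℕ) : F i k (Fin.last n) = (k : ℤ) := by
  unfold F
  rw [if_neg (by have := i.isLt; simp only [Fin.val_last]; omega), if_pos rfl, zero_add]

lemma count_Sset (n : ℕ) (a : Fin (n + 1) → ℕ) :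
    {x : Fin (n + 1) → ℤ | toR x ∈ Sset a}.ncard = (n + 1) + ∑ i, a i := by
  classical
  set s : Finset (Fin (n + 1) → ℤ) :=
    (Finset.univ.sigma fun i : Fin (n + 1) => Finset.range (a i + 1)).image
      (fun p => F p.1 p.2) with hs
  have hseteq : {x : Fin (n + 1) → ℤ | toR x ∈ Sset a} = ↑s := by
    ext x
    simp only [Set.mem_setOf_eq, hs, Finset.coe_image, Set.mem_image, Finset.mem_coe,
      Finset.mem_sigma, Finset.mem_range, Finset.mem_univ, true_and]
    constructor
    · rintro ⟨h1, h2, h3, h4⟩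
      simp only [toR] at h1 h2 h3 h4
      -- integer versions
      have hz1 : ∀ j : Fin n, 0 ≤ x (Fin.castSucc j) := fun j => by
        have := h1 j
        exact_mod_cast this
      have hz2 : (∑ j : Fin n, x (Fin.castSucc j)) ≤ 1 := by
        have : ((∑ j : Fin n, x (Fin.castSucc j) : ℤ) : ℝ) ≤ 1 := by
          push_cast
          exact h2
        exact_mod_cast this
      have hz3 : 0 ≤ x (Fin.last n) := by exact_mod_cast h3
      by_cases hm : (∑ j : Fin n, x (Fin.castSucc j)) = 0
      · have hall : ∀ j : Fin n, x (Fin.castSucc j) = 0 := fun j =>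
          (Finset.sum_eq_zero_iff_of_nonneg (fun j _ => hz1 j)).1 hm j (Finset.mem_univ j)
        have hgx : g a (fun j => ((x (Fin.castSucc j) : ℤ) : ℝ)) = (a 0 : ℝ) := by
          have : (fun j : Fin n => ((x (Fin.castSucc j) : ℤ) : ℝ)) = fun _ => (0:ℝ) := by
            funext j; simp [hall j]
          rw [this, g_vertex0]
        have hlast : x (Fin.last n) ≤ (a 0 : ℤ) := by
          rw [hgx] at h4
          exact_mod_cast h4
        refine ⟨⟨0, (x (Fin.last n)).toNat⟩, ?_, ?_⟩
        · simp only
          omega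
        · funext j
          induction j using Fin.lastCases with
          | last => rw [F_last, Int.toNat_of_nonneg hz3]
          | cast j =>
            rw [F_cast, if_neg (by simp), hall j]
      · obtain ⟨j0, _, hj0⟩ := Finset.exists_ne_zero_of_sum_ne_zero hm
        have hle1 : x (Fin.castSucc j0) ≤ 1 :=
          le_trans (Finset.single_le_sum (fun j _ => hz1 j) (Finset.mem_univ j0)) hz2
        have heq1 : x (Fin.castSucc j0) = 1 :=
          le_antisymm hle1 (lt_of_le_of_ne (hz1 j0) (Ne.symm hj0))
        have hrest : ∀ j : Fin n, j ≠ j0 → x (Fin.castSucc j) = 0 := by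
          have hsplit : x (Fin.castSucc j0) + ∑ j ∈ Finset.univ.erase j0, x (Fin.castSucc j) =
              ∑ j : Fin n, x (Fin.castSucc j) :=
            Finset.add_sum_erase Finset.univ (fun j : Fin n => x (Fin.castSucc j))
              (Finset.mem_univ j0)
          have hpos : 0 ≤ ∑ j ∈ Finset.univ.erase j0, x (Fin.castSucc j) :=
            Finset.sum_nonneg fun j _ => hz1 j
          have hzero : ∑ j ∈ Finset.univ.erase j0, x (Fin.castSucc j) = 0 := by omega
          intro j hj
          exact (Finset.sum_eq_zero_iff_of_nonneg (fun j _ => hz1 j)).1 hzero j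
            (Finset.mem_erase.2 ⟨hj, Finset.mem_univ j⟩)
        have hgx : g a (fun j => ((x (Fin.castSucc j) : ℤ) : ℝ)) = (a j0.succ : ℝ) := by
          have : (fun j : Fin n => ((x (Fin.castSucc j) : ℤ) : ℝ)) =
              fun j => if j = j0 then (1:ℝ) else 0 := by
            funext j
            by_cases hj : j = j0
            · simp [hj, heq1]
            · simp [hj, hrest j hj]
          rw [this, g_vertex]
        have hlast : x (Fin.last n) ≤ (a j0.succ : ℤ) := by
          rw [hgx] at h4
          exact_mod_cast h4
        refine ⟨⟨j0.succ, (x (Fin.last n)).toNat⟩, ?_, ?_⟩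
        · simp only
          omega
        · funext j
          induction j using Fin.lastCases with
          | last => rw [F_last, Int.toNat_of_nonneg hz3]
          | cast j =>
            rw [F_cast]
            by_cases hj : j = j0
            · rw [if_pos (by simp [hj, Fin.val_succ]), hj, heq1]
            · rw [if_neg (by simp only [Fin.val_succ]; rw [Fin.ext_iff] at hj; omega),
                hrest j hj]
    · rintro ⟨⟨i, k⟩, hk, rfl⟩
      simp only [Finset.mem_range] at hk
      have hk' : (k : ℝ) ≤ (a i : ℝ) := by exact_mod_cast Nat.lt_succ_iff.1 hk
      have hcast : ∀ j : Fin n, toR (F i k) (Fin.castSucc j) =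
          if (j : ℕ) + 1 = (i : ℕ) then (1:ℝ) else 0 := by
        intro j
        simp only [toR, F_cast]
        split <;> norm_num
      have hlast : toR (F i k) (Fin.last n) = (k : ℝ) := by
        simp only [toR, F_last]
        norm_num
      induction i using Fin.cases with
      | zero =>
        have hz : ∀ j : Fin n, toR (F 0 k) (Fin.castSucc j) = 0 := by
          intro j; rw [hcast, if_neg (by simp)]
        refine ⟨fun j => by rw [hz], by simp [hz], by rw [hlast]; positivity, ?_⟩
        rw [hlast]
        have : (fun j : Fin n => toR (F 0 k) (Fin.castSucc j)) = fun _ => (0:ℝ) := by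
          funext j; exact hz j
        rw [this, g_vertex0]
        exact hk'
      | succ i0 =>
        have hval : ∀ j : Fin n, toR (F i0.succ k) (Fin.castSucc j) =
            if j = i0 then (1:ℝ) else 0 := by
          intro j
          rw [hcast]
          congr 1
          simp only [Fin.val_succ, eq_iff_iff]
          rw [Fin.ext_iff]; omega
        refine ⟨fun j => by rw [hval]; split <;> norm_num, ?_, by rw [hlast]; positivity, ?_⟩
        · simp only [hval]
          rw [Finset.sum_ite_eq' Finset.univ i0]
          simp
        · rw [hlast]
          have : (fun j : Fin n => toR (F i0.succ k) (Fin.castSucc j)) =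
              fun j => if j = i0 then (1:ℝ) else 0 := by
            funext j; exact hval j
          rw [this, g_vertex]
          exact hk'
  rw [hseteq, Set.ncard_coe_finset]
  have hinj : Set.InjOn (fun p : (i : Fin (n+1)) × ℕ => F p.1 p.2)
      ↑(Finset.univ.sigma fun i : Fin (n + 1) => Finset.range (a i + 1)) := by
    rintro ⟨pi, pk⟩ _ ⟨qi, qk⟩ _ h
    simp only at h
    have hk : pk = qk := by
      have := congrFun h (Fin.last n)
      rw [F_last, F_last] at this
      exact_mod_cast this
    have hcoord : ∀ j : Fin n, ((if (j:ℕ)+1 = (pi:ℕ) then (1:ℤ) else 0)) =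
        ((if (j:ℕ)+1 = (qi:ℕ) then (1:ℤ) else 0)) := by
      intro j
      have := congrFun h (Fin.castSucc j)
      rwa [F_cast, F_cast] at this
    have hi : pi = qi := by
      rcases Fin.eq_zero_or_eq_succ pi with hp | ⟨jp, hp⟩ <;>
        rcases Fin.eq_zero_or_eq_succ qi with hq | ⟨jq, hq⟩
      · rw [hp, hq]
      · exfalso
        have e0 : (if ((jq : ℕ) + 1 = ((0 : Fin (n+1)) : ℕ)) then (1:ℤ) else 0) = 0 := by
          simp
        have e1 : (if ((jq : ℕ) + 1 = ((jq.succ : Fin (n+1)) : ℕ)) then (1:ℤ) else 0) = 1 := by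
          simp
        have := hcoord jq
        rw [hp, hq, e0, e1] at this
        exact absurd this (by norm_num)
      · exfalso
        have e0 : (if ((jp : ℕ) + 1 = ((0 : Fin (n+1)) : ℕ)) then (1:ℤ) else 0) = 0 := by
          simp
        have e1 : (if ((jp : ℕ) + 1 = ((jp.succ : Fin (n+1)) : ℕ)) then (1:ℤ) else 0) = 1 := by
          simp
        have := hcoord jp
        rw [hp, hq, e1, e0] at this
        exact absurd this (by norm_num)
      · have e1 : (if ((jp : ℕ) + 1 = ((jp.succ : Fin (n+1)) : ℕ)) then (1:ℤ) else 0) = 1 := by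
          simp
        have := hcoord jp
        rw [hp, hq, e1] at this
        have hvv : (jp : ℕ) + 1 = ((jq.succ : Fin (n+1)) : ℕ) := by
          by_contra hne
          rw [if_neg hne] at this
          norm_num at this
        rw [hp, hq, Fin.ext_iff]
        simp only [Fin.val_succ] at hvv ⊢
        omega
    subst hi
    subst hk
    rfl
  rw [hs, Finset.card_image_of_injOn hinj, Finset.card_sigma]
  simp only [Finset.card_range]
  rw [Finset.sum_add_distrib, Finset.sum_const, Finset.card_univ, Fintype.card_fin,
    smul_eq_mul, mul_one]
  omega


end LP

/-- A Lawrence prism in `ℝ^d` with heights `a₀, …, a_{d-1}` (nonnegative integers,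
not all zero), i.e. the convex hull of `0, a₀e_d, e₁, e₁ + a₁e_d, …, e_{d-1},
e_{d-1} + a_{d-1}e_d`, has exactly `d + Vol(P)` lattice points, and its normalized
volume equals `a₀ + a₁ + ⋯ + a_{d-1}`. -/
theorem stmt6 (d : ℕ) (hd : 0 < d) (a : Fin d → ℕ) (ha : ∃ i, a i ≠ 0)
    (base top : Fin d → Fin d → ℝ)
    (hbase : base = fun (i j : Fin d) => if (j : ℕ) + 1 = (i : ℕ) then (1 : ℝ) else 0)
    (htop : top = fun (i j : Fin d) =>
      (if (j : ℕ) + 1 = (i : ℕ) then (1 : ℝ) else 0) +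
      (if (j : ℕ) = d - 1 then (a i : ℝ) else 0))
    (P : Set (Fin d → ℝ))
    (hP : P = convexHull ℝ (Set.range base ∪ Set.range top)) :
    {x : Fin d → ℤ | toR x ∈ P}.ncard = d + ∑ i, a i ∧
    (Nat.factorial d : ℝ) * (volume P).toReal = ∑ i, (a i : ℝ) := by
  obtain ⟨n, rfl⟩ : ∃ n, d = n + 1 := ⟨d - 1, (Nat.succ_pred_eq_of_pos hd).symm⟩
  have hPS : P = LP.Sset a := by
    rw [hP, hbase, htop]
    simpa using LP.hull_eq n a
  constructor
  · rw [hPS]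
    exact LP.count_Sset n a
  · rw [hPS, LP.volume_Sset n a]
    rw [ENNReal.toReal_ofReal (by positivity)]
    rw [mul_div_cancel₀]
    exact_mod_cast (Nat.factorial_pos (n + 1)).ne'
end

section
/- The three-dimensional ZPW simplex S³_k = conv((0,0,0), (2,0,0), (0,3,0), (0,0,6k+6)) contains exactly k interior lattice points, namely (1,1,a) for 1 ≤ a ≤ k, and has normalized volume 36(k+1). -/
open MeasureTheory

lemma vol_tri' (q M : ℝ) (hq : 0 < q) (hM : 0 ≤ M) :
    volume {p : ℝ × ℝ | 0 ≤ p.1 ∧ 0 ≤ p.2 ∧ q * p.1 + p.2 ≤ M}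
      = ENNReal.ofReal (M ^ 2 / (2 * q)) := by
  have hmeas : MeasurableSet {p : ℝ × ℝ | 0 ≤ p.1 ∧ 0 ≤ p.2 ∧ q * p.1 + p.2 ≤ M} := by
    apply MeasurableSet.inter
    · exact measurableSet_le measurable_const measurable_fst
    apply MeasurableSet.inter
    · exact measurableSet_le measurable_const measurable_snd
    · exact measurableSet_le ((measurable_fst.const_mul q).add measurable_snd) measurable_const
  rw [MeasureTheory.Measure.volume_eq_prod, Measure.prod_apply hmeas]
  have hslice : ∀ a : ℝ, volume (Prod.mk a ⁻¹' {p : ℝ × ℝ | 0 ≤ p.1 ∧ 0 ≤ p.2 ∧ q * p.1 + p.2 ≤ M})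
      = Set.indicator (Set.Icc 0 (M / q)) (fun a => ENNReal.ofReal (M - q * a)) a := by
    intro a
    rcases le_or_gt 0 a with ha | ha
    · rcases le_or_gt a (M / q) with ha2 | ha2
      · have : Prod.mk a ⁻¹' {p : ℝ × ℝ | 0 ≤ p.1 ∧ 0 ≤ p.2 ∧ q * p.1 + p.2 ≤ M}
            = Set.Icc 0 (M - q * a) := by
          ext b; simp only [Set.mem_preimage, Set.mem_setOf_eq, Set.mem_Icc]
          constructor
          · rintro ⟨-, h1, h2⟩; exact ⟨h1, by linarith⟩
          · rintro ⟨h1, h2⟩; exact ⟨ha, h1, by linarith⟩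
        rw [this, Real.volume_Icc, Set.indicator_of_mem (Set.mem_Icc.2 ⟨ha, ha2⟩)]
        norm_num
      · have : Prod.mk a ⁻¹' {p : ℝ × ℝ | 0 ≤ p.1 ∧ 0 ≤ p.2 ∧ q * p.1 + p.2 ≤ M} = ∅ := by
          ext b; simp only [Set.mem_preimage, Set.mem_setOf_eq, Set.mem_empty_iff_false, iff_false]
          rintro ⟨-, h1, h2⟩
          have : M / q < a := ha2
          rw [div_lt_iff₀ hq] at this
          nlinarith
        rw [this, Set.indicator_of_notMem (by simp [Set.mem_Icc]; intro h; linarith)]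
        simp
    · have : Prod.mk a ⁻¹' {p : ℝ × ℝ | 0 ≤ p.1 ∧ 0 ≤ p.2 ∧ q * p.1 + p.2 ≤ M} = ∅ := by
        ext b; simp only [Set.mem_preimage, Set.mem_setOf_eq, Set.mem_empty_iff_false, iff_false]
        rintro ⟨h, -⟩; linarith
      rw [this, Set.indicator_of_notMem (by simp [Set.mem_Icc]; intro h; linarith)]
      simp
  simp_rw [hslice]
  rw [lintegral_indicator measurableSet_Icc]
  have hint : ∫⁻ a in Set.Icc 0 (M / q), ENNReal.ofReal (M - q * a)
      = ENNReal.ofReal (∫ a in Set.Icc 0 (M / q), (M - q * a)) := by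
    rw [← ofReal_integral_eq_lintegral_ofReal]
    · exact (Continuous.integrableOn_Icc (by fun_prop))
    · filter_upwards [MeasureTheory.ae_restrict_mem measurableSet_Icc] with a ha
      have := ha.2
      rw [le_div_iff₀ hq] at this
      simp only [Pi.zero_apply]; linarith
  rw [hint]
  congr 1
  rw [MeasureTheory.integral_Icc_eq_integral_Ioc, ← intervalIntegral.integral_of_le (by positivity)]
  have : ∫ a in (0:ℝ)..(M / q), (M - q * a) = M * (M/q) - q * ((M/q)^2/2) := by
    rw [intervalIntegral.integral_sub intervalIntegrable_const (by apply IntervalIntegrable.const_mul; exact intervalIntegral.intervalIntegrable_id)]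
    rw [intervalIntegral.integral_const, intervalIntegral.integral_const_mul, integral_id]
    simp only [smul_eq_mul]; ring
  rw [this]
  field_simp
  ring

lemma vol_tet' (p q N : ℝ) (hp : 0 < p) (hq : 0 < q) (hN : 0 ≤ N) :
    volume {x : ℝ × ℝ × ℝ | 0 ≤ x.1 ∧ 0 ≤ x.2.1 ∧ 0 ≤ x.2.2 ∧ p * x.1 + q * x.2.1 + x.2.2 ≤ N}
      = ENNReal.ofReal (N ^ 3 / (6 * p * q)) := by
  set S : Set (ℝ × ℝ × ℝ) :=
    {x | 0 ≤ x.1 ∧ 0 ≤ x.2.1 ∧ 0 ≤ x.2.2 ∧ p * x.1 + q * x.2.1 + x.2.2 ≤ N} with hS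
  have hmeas : MeasurableSet S := by
    apply MeasurableSet.inter
    · exact measurableSet_le measurable_const measurable_fst
    apply MeasurableSet.inter
    · exact measurableSet_le measurable_const measurable_snd.fst
    apply MeasurableSet.inter
    · exact measurableSet_le measurable_const measurable_snd.snd
    · exact measurableSet_le (((measurable_fst.const_mul p).add
        (measurable_snd.fst.const_mul q)).add measurable_snd.snd) measurable_const
  rw [MeasureTheory.Measure.volume_eq_prod, Measure.prod_apply hmeas]
  have hslice : ∀ a : ℝ, volume (Prod.mk a ⁻¹' S)
      = Set.indicator (Set.Icc 0 (N / p))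
          (fun a => ENNReal.ofReal ((N - p * a) ^ 2 / (2 * q))) a := by
    intro a
    rcases le_or_gt 0 a with ha | ha
    · rcases le_or_gt a (N / p) with ha2 | ha2
      · have hpre : Prod.mk a ⁻¹' S
            = {y : ℝ × ℝ | 0 ≤ y.1 ∧ 0 ≤ y.2 ∧ q * y.1 + y.2 ≤ N - p * a} := by
          ext y
          simp only [hS, Set.mem_preimage, Set.mem_setOf_eq]
          constructor
          · rintro ⟨-, h1, h2, h3⟩; exact ⟨h1, h2, by linarith⟩
          · rintro ⟨h1, h2, h3⟩; exact ⟨ha, h1, h2, by linarith⟩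
        have hM : (0:ℝ) ≤ N - p * a := by
          rw [le_div_iff₀ hp] at ha2; linarith
        rw [hpre, vol_tri' q (N - p * a) hq hM,
          Set.indicator_of_mem (Set.mem_Icc.2 ⟨ha, ha2⟩)]
      · have hpre : Prod.mk a ⁻¹' S = ∅ := by
          ext y
          simp only [hS, Set.mem_preimage, Set.mem_setOf_eq, Set.mem_empty_iff_false, iff_false]
          rintro ⟨-, h1, h2, h3⟩
          rw [div_lt_iff₀ hp] at ha2
          nlinarith
        rw [hpre, Set.indicator_of_notMem (by simp [Set.mem_Icc]; intro h; linarith)]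
        simp
    · have hpre : Prod.mk a ⁻¹' S = ∅ := by
        ext y
        simp only [hS, Set.mem_preimage, Set.mem_setOf_eq, Set.mem_empty_iff_false, iff_false]
        rintro ⟨h, -⟩; linarith
      rw [hpre, Set.indicator_of_notMem (by simp [Set.mem_Icc]; intro h; linarith)]
      simp
  simp_rw [hslice]
  rw [lintegral_indicator measurableSet_Icc]
  have hint : ∫⁻ a in Set.Icc 0 (N / p), ENNReal.ofReal ((N - p * a) ^ 2 / (2 * q))
      = ENNReal.ofReal (∫ a in Set.Icc 0 (N / p), (N - p * a) ^ 2 / (2 * q)) := by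
    rw [← ofReal_integral_eq_lintegral_ofReal]
    · exact Continuous.integrableOn_Icc (by fun_prop)
    · filter_upwards with a
      positivity
  rw [hint]
  congr 1
  rw [MeasureTheory.integral_Icc_eq_integral_Ioc,
    ← intervalIntegral.integral_of_le (by positivity)]
  have hp' : p ≠ 0 := ne_of_gt hp
  have key : ∫ a in (0:ℝ)..(N / p), (N - p * a) ^ 2 / (2 * q)
      = (-((N - p * (N/p)) ^ 3 / (3 * p)) - -((N - p * 0) ^ 3 / (3 * p))) / (2 * q) := by
    rw [intervalIntegral.integral_div]
    congr 1
    refine intervalIntegral.integral_eq_sub_of_hasDerivAt (f := fun a => -((N - p * a) ^ 3 / (3 * p))) (f' := fun a => (N - p * a) ^ 2) ?_ ?_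
    · intro a _
      have h1 : HasDerivAt (fun a : ℝ => N - p * a) (-p) a := by
        simpa using ((hasDerivAt_id a).const_mul p).const_sub N
      have h2 := ((h1.pow 3).div_const (3 * p)).neg
      convert h2 using 1
      · rfl
      rw [show ((3:ℕ):ℝ) * (N - p * a) ^ (3 - 1) * -p = -((3 * p) * (N - p * a) ^ 2) by
        push_cast; ring, neg_div, neg_neg,
        mul_div_cancel_left₀ _ (by positivity : (3:ℝ) * p ≠ 0)]
    · exact ((continuous_const.sub (continuous_const.mul continuous_id)).pow 2).intervalIntegrable 0 (N / p)
  rw [key]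
  field_simp
  ring

/-- The three-dimensional ZPW simplex
`S³_k = conv((0,0,0), (2,0,0), (0,3,0), (0,0,6k+6))` contains exactly `k`
interior lattice points, namely `(1,1,a)` for `1 ≤ a ≤ k`, and has normalized
volume `36(k+1)`. -/
theorem stmt13 (k : ℕ) (hk : 1 ≤ k)
    (P : Set (Fin 3 → ℝ))
    (hP : P = convexHull ℝ
      {![0, 0, 0], ![2, 0, 0], ![0, 3, 0], ![0, 0, 6 * (k : ℝ) + 6]}) :
    {x : Fin 3 → ℤ | toR x ∈ interior P} =
      {x : Fin 3 → ℤ | x 0 = 1 ∧ x 1 = 1 ∧ 1 ≤ x 2 ∧ x 2 ≤ (k : ℤ)} ∧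
    {x : Fin 3 → ℤ | toR x ∈ interior P}.ncard = k ∧
    (6 : ℝ) * (volume P).toReal = 36 * ((k : ℝ) + 1) := by
  set K : ℝ := (k : ℝ) + 1 with hKdef
  have hkR : (1:ℝ) ≤ (k:ℝ) := by exact_mod_cast hk
  have hkR0 : (0:ℝ) ≤ (k:ℝ) := by positivity
  have hK0 : (0:ℝ) < K := by positivity
  have hK6 : (0:ℝ) < 6 * K := by positivity
  set E : Set (Fin 3 → ℝ) :=
    {x | 0 ≤ x 0 ∧ 0 ≤ x 1 ∧ 0 ≤ x 2 ∧ 3 * K * x 0 + 2 * K * x 1 + x 2 ≤ 6 * K} with hEdef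
  -- Step 1 : P = E
  have hPE : P = E := by
    rw [hP]
    apply le_antisymm
    · apply convexHull_min
      · intro v hv
        simp only [Set.mem_insert_iff, Set.mem_singleton_iff] at hv
        rcases hv with rfl | rfl | rfl | rfl <;>
          refine ⟨?_, ?_, ?_, ?_⟩ <;> simp [hKdef] <;> nlinarith [hkR, hkR0]
      · rintro x ⟨hx0, hx1, hx2, hxl⟩ y ⟨hy0, hy1, hy2, hyl⟩ a b ha hb hab
        refine ⟨?_, ?_, ?_, ?_⟩ <;>
          simp only [Pi.add_apply, Pi.smul_apply, smul_eq_mul]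
        · positivity
        · positivity
        · positivity
        · nlinarith
    · intro x hx
      obtain ⟨hx0, hx1, hx2, hxl⟩ := hx
      have hw00 : (0:ℝ) ≤ 1 - x 0 / 2 - x 1 / 3 - x 2 / (6*K) := by
        have hc : x 0 / 2 + x 1 / 3 + x 2 / (6*K) = (3*K*x 0 + 2*K*x 1 + x 2) / (6*K) := by
          field_simp; ring
        have h1 := (div_le_one hK6).2 hxl
        linarith [hc ▸ h1]
      have hz : ∀ i ∈ Finset.univ, (![![0,0,0], ![2,0,0], ![0,3,0], ![0,0,6*(k:ℝ)+6]] : Fin 4 → (Fin 3 → ℝ)) i ∈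
          ({![0, 0, 0], ![2, 0, 0], ![0, 3, 0], ![0, 0, 6 * (k : ℝ) + 6]} : Set (Fin 3 → ℝ)) := by
        intro i _
        fin_cases i <;> simp
      have hw0 : ∀ i ∈ Finset.univ,
          (0:ℝ) ≤ (![1 - x 0 / 2 - x 1 / 3 - x 2 / (6*K), x 0 / 2, x 1 / 3, x 2 / (6*K)] : Fin 4 → ℝ) i := by
        intro i _
        fin_cases i
        · exact hw00
        · show (0:ℝ) ≤ x 0 / 2; positivity
        · show (0:ℝ) ≤ x 1 / 3; positivity
        · show (0:ℝ) ≤ x 2 / (6*K); positivity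
      have hw1 : ∑ i : Fin 4,
          (![1 - x 0 / 2 - x 1 / 3 - x 2 / (6*K), x 0 / 2, x 1 / 3, x 2 / (6*K)] : Fin 4 → ℝ) i = 1 := by
        simp [Fin.sum_univ_four]
        ring
      have hmem := (convex_convexHull ℝ
        ({![0, 0, 0], ![2, 0, 0], ![0, 3, 0], ![0, 0, 6 * (k : ℝ) + 6]} : Set (Fin 3 → ℝ))).sum_mem
        hw0 hw1 (fun i hi => subset_convexHull ℝ _ (hz i hi))
      convert hmem using 1
      have hKne : (k:ℝ) + 1 ≠ 0 := by positivity
      have e2 : (⟨2, by omega⟩ : Fin 3) = 2 := rfl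
      funext j
      rw [hKdef]
      fin_cases j <;>
        simp only [Finset.sum_apply, Pi.smul_apply, smul_eq_mul, Fin.sum_univ_four,
          Matrix.cons_val_zero, Matrix.cons_val_one, Matrix.head_cons, e2,
          Matrix.cons_val_two, Matrix.tail_cons, Matrix.cons_val_three, Fin.mk_zero, Fin.mk_one,
          mul_zero, zero_mul, add_zero, zero_add] <;>
        first
          | ring1
          | (rw [div_mul_eq_mul_div, eq_comm, div_eq_iff
              (by positivity : (0:ℝ) < 6 * ((k:ℝ) + 1)).ne']; ring)
  -- Step 2 : interior of E
  let pr : Fin 3 → ((Fin 3 → ℝ) →L[ℝ] ℝ) :=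
    fun i => ContinuousLinearMap.proj (R := ℝ) (φ := fun _ : Fin 3 => ℝ) i
  let L : (Fin 3 → ℝ) →L[ℝ] ℝ := (3*K) • pr 0 + (2*K) • pr 1 + pr 2
  have hLapp : ∀ x : Fin 3 → ℝ, L x = 3 * K * x 0 + 2 * K * x 1 + x 2 := by
    intro x
    simp [L, pr, ContinuousLinearMap.proj_apply]
    try ring
  have hE4 : E = (pr 0 ⁻¹' Set.Ici 0) ∩ ((pr 1 ⁻¹' Set.Ici 0) ∩
      ((pr 2 ⁻¹' Set.Ici 0) ∩ (L ⁻¹' Set.Iic (6*K)))) := by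
    ext x
    simp [hEdef, pr, hLapp, ContinuousLinearMap.proj_apply, and_assoc]
  have hLsurj : Function.Surjective L := by
    intro c
    refine ⟨fun j => if j = 2 then c else 0, ?_⟩
    rw [hLapp]
    simp
  have hIntE : interior E =
      {x : Fin 3 → ℝ | 0 < x 0 ∧ 0 < x 1 ∧ 0 < x 2 ∧ 3 * K * x 0 + 2 * K * x 1 + x 2 < 6 * K} := by
    rw [hE4, interior_inter, interior_inter, interior_inter,
      (pr 0).interior_preimage (Function.surjective_eval _),
      (pr 1).interior_preimage (Function.surjective_eval _),
      (pr 2).interior_preimage (Function.surjective_eval _),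
      L.interior_preimage hLsurj, interior_Ici, interior_Iic]
    ext x
    simp [pr, hLapp, ContinuousLinearMap.proj_apply, and_assoc]
  -- Step 3 : lattice points of the interior
  have hκ : (1:ℤ) ≤ (k:ℤ) := by exact_mod_cast hk
  have hlat : {x : Fin 3 → ℤ | toR x ∈ interior P} =
      {x : Fin 3 → ℤ | x 0 = 1 ∧ x 1 = 1 ∧ 1 ≤ x 2 ∧ x 2 ≤ (k : ℤ)} := by
    ext x
    simp only [Set.mem_setOf_eq, hPE, hIntE, toR]
    constructor
    · rintro ⟨h0, h1, h2, h3⟩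
      have ha : 0 < x 0 := by exact_mod_cast h0
      have hb : 0 < x 1 := by exact_mod_cast h1
      have hc : 0 < x 2 := by exact_mod_cast h2
      have h3' : 3 * ((k:ℤ)+1) * x 0 + 2 * ((k:ℤ)+1) * x 1 + x 2 < 6 * ((k:ℤ)+1) := by
        rw [hKdef] at h3
        exact_mod_cast h3
      have ha2 : x 0 < 2 := by
        by_contra hcon
        push_neg at hcon
        nlinarith [mul_nonneg (by linarith : (0:ℤ) ≤ (k:ℤ)+1) (by linarith : (0:ℤ) ≤ x 0 - 2),
          mul_nonneg (by linarith : (0:ℤ) ≤ (k:ℤ)+1) (by linarith : (0:ℤ) ≤ x 1 - 1)]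
      have hb2 : x 1 < 2 := by
        by_contra hcon
        push_neg at hcon
        nlinarith [mul_nonneg (by linarith : (0:ℤ) ≤ (k:ℤ)+1) (by linarith : (0:ℤ) ≤ x 1 - 2),
          mul_nonneg (by linarith : (0:ℤ) ≤ (k:ℤ)+1) (by linarith : (0:ℤ) ≤ x 0 - 1)]
      have ha1 : x 0 = 1 := by omega
      have hb1 : x 1 = 1 := by omega
      refine ⟨ha1, hb1, by omega, ?_⟩
      rw [ha1, hb1] at h3'
      linarith
    · rintro ⟨h0, h1, h2, h3⟩
      have h2R : (1:ℝ) ≤ (x 2 : ℝ) := by exact_mod_cast h2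
      have h3R : ((x 2 : ℝ)) ≤ (k:ℝ) := by exact_mod_cast h3
      refine ⟨by rw [h0]; norm_num, by rw [h1]; norm_num, by linarith, ?_⟩
      rw [h0, h1, hKdef]
      push_cast
      linarith
  -- Step 4 : counting
  have hcard : {x : Fin 3 → ℤ | toR x ∈ interior P}.ncard = k := by
    rw [hlat]
    have himg : {x : Fin 3 → ℤ | x 0 = 1 ∧ x 1 = 1 ∧ 1 ≤ x 2 ∧ x 2 ≤ (k : ℤ)}
        = (fun a : ℤ => ![1, 1, a]) '' Set.Icc 1 (k:ℤ) := by
      ext x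
      constructor
      · rintro ⟨h0, h1, h2, h3⟩
        refine ⟨x 2, ⟨h2, h3⟩, ?_⟩
        funext i
        fin_cases i <;> simp [h0, h1]
      · rintro ⟨a, ⟨ha1, ha2⟩, rfl⟩
        refine ⟨by simp, by simp, by simpa using ha1, by simpa using ha2⟩
    rw [himg, Set.ncard_image_of_injective _ (fun a b hab => by simpa using congrFun hab 2),
      ← Finset.coe_Icc, Set.ncard_coe_finset, Int.card_Icc]
    simp
  -- Step 5 : volume
  have hS3meas : MeasurableSet {y : ℝ × ℝ × ℝ | 0 ≤ y.1 ∧ 0 ≤ y.2.1 ∧ 0 ≤ y.2.2 ∧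
      3*K * y.1 + 2*K * y.2.1 + y.2.2 ≤ 6*K} := by
    apply MeasurableSet.inter
    · exact measurableSet_le measurable_const measurable_fst
    apply MeasurableSet.inter
    · exact measurableSet_le measurable_const measurable_snd.fst
    apply MeasurableSet.inter
    · exact measurableSet_le measurable_const measurable_snd.snd
    · exact measurableSet_le (((measurable_fst.const_mul (3*K)).add
        (measurable_snd.fst.const_mul (2*K))).add measurable_snd.snd) measurable_const
  have hcomp : (fun x : Fin 3 → ℝ => (x 0, x 1, x 2)) =
      (Prod.map id ⇑(MeasurableEquiv.finTwoArrow (α := ℝ))) ∘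
        ⇑(MeasurableEquiv.piFinSuccAbove (fun _ : Fin 3 => ℝ) 0) := by
    funext x
    rfl
  have hmp : MeasurePreserving (fun x : Fin 3 → ℝ => (x 0, x 1, x 2)) volume volume := by
    rw [hcomp]
    have h2' := (MeasurePreserving.id (volume : Measure ℝ)).prod
      (volume_preserving_finTwoArrow ℝ)
    rw [← Measure.volume_eq_prod] at h2'
    exact h2'.comp (volume_preserving_piFinSuccAbove (fun _ : Fin 3 => ℝ) 0)
  have hpreE : E = (fun x : Fin 3 → ℝ => (x 0, x 1, x 2)) ⁻¹'
      {y : ℝ × ℝ × ℝ | 0 ≤ y.1 ∧ 0 ≤ y.2.1 ∧ 0 ≤ y.2.2 ∧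
        3*K * y.1 + 2*K * y.2.1 + y.2.2 ≤ 6*K} := rfl
  have hvol : volume P = ENNReal.ofReal (6 * K) := by
    rw [hPE, hpreE, hmp.measure_preimage hS3meas.nullMeasurableSet,
      vol_tet' (3*K) (2*K) (6*K) (by positivity) (by positivity) (by positivity)]
    congr 1
    field_simp
    ring
  refine ⟨hlat, hcard, ?_⟩
  rw [hvol, ENNReal.toReal_ofReal (by positivity), hKdef]
  ring
end

section
/- The three-dimensional ZPW simplex S³_k = conv((0,0,0), (2,0,0), (0,3,0), (0,0,6k+6)) contains exactly 16k + 23 lattice points. -/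
/-- A vertical column of lattice points over `(a, b)` with height `n`. -/
noncomputable def col (a b n : ℤ) : Finset (Fin 3 → ℤ) := (Finset.Icc 0 n).image (fun z => ![a, b, z])

lemma mem_col {a b n : ℤ} {x : Fin 3 → ℤ} :
    x ∈ col a b n ↔ x 0 = a ∧ x 1 = b ∧ 0 ≤ x 2 ∧ x 2 ≤ n := by
  constructor
  · rintro h
    simp only [col, Finset.mem_image, Finset.mem_Icc] at h
    obtain ⟨z, hz, rfl⟩ := h
    simp [hz.1, hz.2]
  · rintro ⟨h0, h1, h2, h3⟩
    simp only [col, Finset.mem_image, Finset.mem_Icc]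
    refine ⟨x 2, ⟨h2, h3⟩, ?_⟩
    funext i
    fin_cases i <;> simp [h0, h1]

lemma card_col {a b n : ℤ} (hn : 0 ≤ n) : (col a b n).card = (n + 1).toNat := by
  have hinj : Function.Injective (fun z : ℤ => (![a, b, z] : Fin 3 → ℤ)) := by
    intro z z' h
    have := congrFun h 2
    simpa using this
  rw [col, Finset.card_image_of_injective _ hinj, Int.card_Icc]
  omega

lemma col_disjoint {a b n a' b' n' : ℤ} (h : a ≠ a' ∨ b ≠ b') :
    Disjoint (col a b n) (col a' b' n') := by
  rw [Finset.disjoint_left]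
  intro x hx hx'
  rw [mem_col] at hx hx'
  omega

lemma int_char (k : ℕ) (x : Fin 3 → ℤ) :
    (0 ≤ x 0 ∧ 0 ≤ x 1 ∧ 0 ≤ x 2 ∧
      3 * ((k : ℤ) + 1) * x 0 + 2 * ((k : ℤ) + 1) * x 1 + x 2 ≤ 6 * ((k : ℤ) + 1)) ↔
    x ∈ col 0 0 (6*k+6) ∪ col 0 1 (4*k+4) ∪ col 0 2 (2*k+2) ∪ col 0 3 0
      ∪ col 1 0 (3*k+3) ∪ col 1 1 (k+1) ∪ col 2 0 0 := by
  simp only [Finset.mem_union, mem_col]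
  constructor
  · rintro ⟨h0, h1, h2, h3⟩
    have hk : (0:ℤ) ≤ (k:ℤ) := Int.natCast_nonneg k
    have hx0 : x 0 ≤ 2 := by nlinarith
    have hx1 : x 1 ≤ 3 := by nlinarith
    rcases (show x 0 = 0 ∨ x 0 = 1 ∨ x 0 = 2 by omega) with hA|hA|hA <;>
      rcases (show x 1 = 0 ∨ x 1 = 1 ∨ x 1 = 2 ∨ x 1 = 3 by omega) with hB|hB|hB|hB <;>
      rw [hA, hB] at h3 <;> rw [hA, hB] <;> ring_nf at h3 <;> omega
  · rintro (((((((⟨h0, h1, h2, h3⟩ | ⟨h0, h1, h2, h3⟩) | ⟨h0, h1, h2, h3⟩) | ⟨h0, h1, h2, h3⟩)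
      | ⟨h0, h1, h2, h3⟩) | ⟨h0, h1, h2, h3⟩) | ⟨h0, h1, h2, h3⟩)) <;>
      rw [h0, h1] <;> refine ⟨by norm_num, by norm_num, h2, by ring_nf; omega⟩

lemma hull_char (k : ℕ) (p : Fin 3 → ℝ) :
    p ∈ convexHull ℝ
      ({![0, 0, 0], ![2, 0, 0], ![0, 3, 0], ![0, 0, 6 * (k : ℝ) + 6]} : Set (Fin 3 → ℝ)) ↔
    (0 ≤ p 0 ∧ 0 ≤ p 1 ∧ 0 ≤ p 2 ∧
      3 * ((k : ℝ) + 1) * p 0 + 2 * ((k : ℝ) + 1) * p 1 + p 2 ≤ 6 * ((k : ℝ) + 1)) := by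
  have hk0 : (0 : ℝ) ≤ (k : ℝ) := Nat.cast_nonneg k
  have hc : (0 : ℝ) < 6 * (k : ℝ) + 6 := by positivity
  constructor
  · intro hp
    have hsub : convexHull ℝ
        ({![0, 0, 0], ![2, 0, 0], ![0, 3, 0], ![0, 0, 6 * (k : ℝ) + 6]} : Set (Fin 3 → ℝ)) ⊆
        {q : Fin 3 → ℝ | 0 ≤ q 0 ∧ 0 ≤ q 1 ∧ 0 ≤ q 2 ∧
          3 * ((k : ℝ) + 1) * q 0 + 2 * ((k : ℝ) + 1) * q 1 + q 2 ≤ 6 * ((k : ℝ) + 1)} := by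
      apply convexHull_min
      · rintro q hq
        simp only [Set.mem_insert_iff, Set.mem_singleton_iff] at hq
        rcases hq with rfl | rfl | rfl | rfl <;>
          refine ⟨?_, ?_, ?_, ?_⟩ <;> norm_num [Matrix.cons_val_two, Matrix.tail_cons, Matrix.head_cons] <;> linarith
      · rintro x hx y hy a b ha hb hab
        simp only [Set.mem_setOf_eq, Pi.add_apply, Pi.smul_apply, smul_eq_mul] at *
        refine ⟨by nlinarith [hx.1, hy.1], by nlinarith [hx.2.1, hy.2.1],
          by nlinarith [hx.2.2.1, hy.2.2.1], ?_⟩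
        nlinarith [mul_le_mul_of_nonneg_left hx.2.2.2 ha,
          mul_le_mul_of_nonneg_left hy.2.2.2 hb]
    exact hsub hp
  · rintro ⟨h0, h1, h2, h3⟩
    set w : Fin 4 → ℝ := ![1 - (p 0 / 2 + p 1 / 3 + p 2 / (6 * (k : ℝ) + 6)),
      p 0 / 2, p 1 / 3, p 2 / (6 * (k : ℝ) + 6)] with hw
    set z : Fin 4 → (Fin 3 → ℝ) := ![![0, 0, 0], ![2, 0, 0], ![0, 3, 0],
      ![0, 0, 6 * (k : ℝ) + 6]] with hz
    have hkey : p 0 / 2 + p 1 / 3 + p 2 / (6 * (k : ℝ) + 6)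
        = (3 * ((k : ℝ) + 1) * p 0 + 2 * ((k : ℝ) + 1) * p 1 + p 2) / (6 * (k : ℝ) + 6) := by
      field_simp
      ring
    have hw0 : 0 ≤ w 0 := by
      simp only [hw, Matrix.cons_val_zero, sub_nonneg, hkey]
      rw [div_le_one hc]
      linarith
    have hsum : ∑ i, w i = 1 := by
      simp [hw, Fin.sum_univ_four]
      ring
    have hwnn : ∀ i ∈ Finset.univ, 0 ≤ w i := by
      intro i _
      fin_cases i
      · exact hw0
      · show (0:ℝ) ≤ w 1
        simp only [hw, Matrix.cons_val_one, Matrix.head_cons]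
        exact div_nonneg h0 (by norm_num)
      · show (0:ℝ) ≤ w 2
        simp only [hw]
        norm_num
        exact div_nonneg h1 (by norm_num)
      · show (0:ℝ) ≤ w 3
        simp only [hw]
        norm_num [Fin.isValue]
        exact div_nonneg h2 (le_of_lt hc)
    have hmem := Finset.centerMass_mem_convexHull (Finset.univ) hwnn (by rw [hsum]; norm_num)
      (z := z) (s := ({![0, 0, 0], ![2, 0, 0], ![0, 3, 0], ![0, 0, 6 * (k : ℝ) + 6]} :
        Set (Fin 3 → ℝ))) (by intro i _; fin_cases i <;> simp [hz])
    have heq : Finset.univ.centerMass w z = p := by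
      rw [Finset.centerMass_eq_of_sum_1 _ _ hsum]
      funext j
      have : (∑ i, w i • z i) j = w 0 * z 0 j + w 1 * z 1 j + w 2 * z 2 j + w 3 * z 3 j := by
        simp [Fin.sum_univ_four]
      rw [this]
      fin_cases j <;>
        simp only [hw, hz, Fin.reduceFinMk, Matrix.cons_val_zero, Matrix.cons_val_one, Matrix.head_cons,
          Matrix.cons_val_two, Matrix.tail_cons, Matrix.cons_val_three] <;>
        field_simp <;> ring
    rwa [heq] at hmem

/-- The three-dimensional ZPW simplex
`S³_k = conv((0,0,0), (2,0,0), (0,3,0), (0,0,6k+6))` contains exactly `16k + 23`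
lattice points. -/
theorem stmt14 (k : ℕ) (hk : 1 ≤ k)
    (P : Set (Fin 3 → ℝ))
    (hP : P = convexHull ℝ
      {![0, 0, 0], ![2, 0, 0], ![0, 3, 0], ![0, 0, 6 * (k : ℝ) + 6]}) :
    {x : Fin 3 → ℤ | toR x ∈ P}.ncard = 16 * k + 23 := by
  have hset : {x : Fin 3 → ℤ | toR x ∈ P}
      = ↑(col 0 0 (6*k+6) ∪ col 0 1 (4*k+4) ∪ col 0 2 (2*k+2) ∪ col 0 3 0
        ∪ col 1 0 (3*k+3) ∪ col 1 1 (k+1) ∪ col 2 0 0) := by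
    ext x
    rw [Set.mem_setOf_eq, hP, hull_char k (toR x), Finset.mem_coe, ← int_char k x]
    simp only [toR]
    constructor
    · rintro ⟨h0, h1, h2, h3⟩
      refine ⟨by exact_mod_cast h0, by exact_mod_cast h1, by exact_mod_cast h2, ?_⟩
      exact_mod_cast h3
    · rintro ⟨h0, h1, h2, h3⟩
      refine ⟨by exact_mod_cast h0, by exact_mod_cast h1, by exact_mod_cast h2, ?_⟩
      exact_mod_cast h3
  rw [hset, Set.ncard_coe_finset]
  have hk' : (0:ℤ) ≤ (k:ℤ) := Int.natCast_nonneg k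
  rw [Finset.card_union_of_disjoint (by
        simp only [Finset.disjoint_union_left]
        exact ⟨⟨⟨⟨⟨col_disjoint (by norm_num), col_disjoint (by norm_num)⟩,
          col_disjoint (by norm_num)⟩, col_disjoint (by right; norm_num)⟩,
          col_disjoint (by norm_num)⟩, col_disjoint (by norm_num)⟩),
      Finset.card_union_of_disjoint (by
        simp only [Finset.disjoint_union_left]
        exact ⟨⟨⟨⟨col_disjoint (by right; norm_num), col_disjoint (by norm_num)⟩,
          col_disjoint (by right; norm_num)⟩, col_disjoint (by norm_num)⟩,
          col_disjoint (by right; norm_num)⟩),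
      Finset.card_union_of_disjoint (by
        simp only [Finset.disjoint_union_left]
        exact ⟨⟨⟨col_disjoint (by norm_num), col_disjoint (by norm_num)⟩,
          col_disjoint (by norm_num)⟩, col_disjoint (by norm_num)⟩),
      Finset.card_union_of_disjoint (by
        simp only [Finset.disjoint_union_left]
        exact ⟨⟨col_disjoint (by right; norm_num), col_disjoint (by right; norm_num)⟩,
          col_disjoint (by right; norm_num)⟩),
      Finset.card_union_of_disjoint (by
        simp only [Finset.disjoint_union_left]
        exact ⟨col_disjoint (by right; norm_num), col_disjoint (by right; norm_num)⟩),
      Finset.card_union_of_disjoint (col_disjoint (by right; norm_num)),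
      card_col (by omega), card_col (by omega), card_col (by omega), card_col le_rfl,
      card_col (by omega), card_col (by omega), card_col le_rfl]
  omega
end

section
/- For each fixed integer h*₃ ≥ 2, the set of points (h*₁, h*₂) ∈ ℝ² satisfying (1) h*₃ ≤ h*₁, (2) h*₁ ≤ h*₂, (3) h*₂ ≤ 19h*₃ + 16, (4*) h*₂ - h*₁ ≤ 9h*₃ + 7, (5) 5h*₃h*₁ + 4h*₁ + 4 ≤ 4h*₃² + 4h*₃h*₂ + 5h*₂ is a pentagon with vertices (h*₃, h*₃), (4h*₃+4, 4h*₃+4), (16h*₃+19, 19h*₃+16), (10h*₃+9, 19h*₃+16), and (h*₃, 10h*₃+7). -/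
private lemma halfspace_convex (a b c : ℝ) :
    Convex ℝ {p : ℝ × ℝ | a * p.1 + b * p.2 ≤ c} := by
  intro p hp q hq s r hs hr hsr
  simp only [Set.mem_setOf_eq] at *
  have h1 := mul_le_mul_of_nonneg_left hp hs
  have h2 := mul_le_mul_of_nonneg_left hq hr
  have hc : s * c + r * c = c := by rw [← add_mul, hsr, one_mul]
  simp only [Prod.fst_add, Prod.snd_add, Prod.smul_fst, Prod.smul_snd, smul_eq_mul]
  nlinarith [h1, h2, hc]

private lemma mem_hull3 {s : Set (ℝ × ℝ)} {A B C p : ℝ × ℝ}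
    (hA : A ∈ s) (hB : B ∈ s) (hC : C ∈ s)
    {a b c : ℝ} (ha : 0 ≤ a) (hb : 0 ≤ b) (hc : 0 ≤ c) (habc : a + b + c = 1)
    (hp : p = a • A + b • B + c • C) : p ∈ convexHull ℝ s := by
  have h := Finset.centerMass_mem_convexHull (Finset.univ : Finset (Fin 3))
    (w := ![a, b, c]) (z := ![A, B, C])
    (by intro i _; fin_cases i <;> simpa)
    (by simp [Fin.sum_univ_three]; linarith)
    (by intro i _; fin_cases i <;> simpa)
  rw [Finset.centerMass_eq_of_sum_1] at h
  · rw [hp]; simpa [Fin.sum_univ_three] using h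
  · simp [Fin.sum_univ_three]; linarith

set_option maxHeartbeats 1000000 in
/-- For each fixed integer `h₃ ≥ 2`, the region in the `(h₁, h₂)`-plane cut out by
the inequalities (1) `h₃ ≤ h₁`, (2) `h₁ ≤ h₂`, (3) `h₂ ≤ 19h₃ + 16`,
(4*) `h₂ - h₁ ≤ 9h₃ + 7`, (5) `5h₃h₁ + 4h₁ + 4 ≤ 4h₃² + 4h₃h₂ + 5h₂`
is a pentagon with vertices `(h₃, h₃)`, `(4h₃+4, 4h₃+4)`, `(16h₃+19, 19h₃+16)`,
`(10h₃+9, 19h₃+16)` and `(h₃, 10h₃+7)`. -/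
theorem stmt17 (h3 : ℤ) (hh3 : 2 ≤ h3)
    (S : Set (ℝ × ℝ))
    (hS : S = {p : ℝ × ℝ | (h3 : ℝ) ≤ p.1 ∧ p.1 ≤ p.2 ∧
      p.2 ≤ 19 * (h3 : ℝ) + 16 ∧ p.2 - p.1 ≤ 9 * (h3 : ℝ) + 7 ∧
      5 * (h3 : ℝ) * p.1 + 4 * p.1 + 4 ≤
        4 * (h3 : ℝ) ^ 2 + 4 * (h3 : ℝ) * p.2 + 5 * p.2})
    (vs : Finset (ℝ × ℝ))
    (hvs : vs = {((h3 : ℝ), (h3 : ℝ)),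
      (4 * (h3 : ℝ) + 4, 4 * (h3 : ℝ) + 4),
      (16 * (h3 : ℝ) + 19, 19 * (h3 : ℝ) + 16),
      (10 * (h3 : ℝ) + 9, 19 * (h3 : ℝ) + 16),
      ((h3 : ℝ), 10 * (h3 : ℝ) + 7)}) :
    S = convexHull ℝ (vs : Set (ℝ × ℝ)) ∧ vs.card = 5 ∧
    ∀ v ∈ vs, v ∉ convexHull ℝ ((vs.erase v : Finset (ℝ × ℝ)) : Set (ℝ × ℝ)) := by
  have ht : (2:ℝ) ≤ (h3:ℝ) := by exact_mod_cast hh3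
  set t : ℝ := (h3:ℝ) with hts
  have hAv : ((t, t) : ℝ × ℝ) ∈ (vs : Set (ℝ × ℝ)) := by rw [hvs]; simp
  have hBv : ((4*t+4, 4*t+4) : ℝ × ℝ) ∈ (vs : Set (ℝ × ℝ)) := by rw [hvs]; simp
  have hCv : ((16*t+19, 19*t+16) : ℝ × ℝ) ∈ (vs : Set (ℝ × ℝ)) := by rw [hvs]; simp
  have hDv : ((10*t+9, 19*t+16) : ℝ × ℝ) ∈ (vs : Set (ℝ × ℝ)) := by rw [hvs]; simp
  have hEv : ((t, 10*t+7) : ℝ × ℝ) ∈ (vs : Set (ℝ × ℝ)) := by rw [hvs]; simp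
  have hd1 : (0:ℝ) < 3*t - 3 := by linarith
  have hd2 : (0:ℝ) < 3*t + 4 := by linarith
  have hd3 : (0:ℝ) < 18*t + 16 := by linarith
  have hd4 : (0:ℝ) < 6*t + 10 := by linarith
  have hd5 : (0:ℝ) < 9*t + 9 := by linarith
  have hd6 : (0:ℝ) < 9*t + 7 := by linarith
  have hd7 : t - 1 ≠ 0 := ne_of_gt (by linarith)
  have hd8 : 3*t - 3 ≠ 0 := ne_of_gt hd1
  refine ⟨?_, ?_, ?_⟩
  · -- S = convexHull
    apply Set.Subset.antisymm
    · rw [hS]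
      rintro ⟨x, y⟩ hmem
      simp only [Set.mem_setOf_eq] at hmem
      obtain ⟨m1, m2, m3, m4, m5⟩ := hmem
      by_cases hc1 : (15*t+19)*(y-t) ≤ (18*t+16)*(x-t)
      · -- triangle A B C
        refine mem_hull3 hAv hBv hCv
          (a := ((3*t+4)*(3*t-3) - ((18*t+16)*(x-t) - (15*t+19)*(y-t)) - (3*t+4)*(y-x))/((3*t+4)*(3*t-3)))
          (b := ((18*t+16)*(x-t) - (15*t+19)*(y-t))/((3*t+4)*(3*t-3)))
          (c := (y-x)/(3*t-3)) ?_ ?_ ?_ ?_ ?_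
        · apply div_nonneg _ (by positivity)
          nlinarith [m5]
        · apply div_nonneg (by linarith) (by positivity)
        · apply div_nonneg (by linarith) (by linarith)
        · field_simp
          ring
        · refine Prod.ext ?_ ?_ <;>
            simp only [Prod.fst_add, Prod.snd_add, Prod.smul_fst, Prod.smul_snd,
              smul_eq_mul] <;> field_simp <;> ring
      · by_cases hc2 : (9*t+9)*(y-t) ≤ (18*t+16)*(x-t)
        · -- triangle A C D
          push_neg at hc1
          refine mem_hull3 hAv hCv hDv
            (a := (18*t+16 - (y-t))/(18*t+16))
            (b := ((18*t+16)*(x-t) - (9*t+9)*(y-t))/((18*t+16)*(6*t+10)))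
            (c := ((15*t+19)*(y-t) - (18*t+16)*(x-t))/((18*t+16)*(6*t+10))) ?_ ?_ ?_ ?_ ?_
          · apply div_nonneg (by linarith) (by linarith)
          · apply div_nonneg (by linarith) (by positivity)
          · apply div_nonneg (by linarith) (by positivity)
          · field_simp
            ring
          · refine Prod.ext ?_ ?_ <;>
              simp only [Prod.fst_add, Prod.snd_add, Prod.smul_fst, Prod.smul_snd,
                smul_eq_mul] <;> field_simp <;> ring
        · -- triangle A D E
          push_neg at hc2
          refine mem_hull3 hAv hDv hEv
            (a := (9*t+7 - (y-x))/(9*t+7))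
            (b := (x-t)/(9*t+9))
            (c := ((9*t+9)*(y-t) - (18*t+16)*(x-t))/((9*t+9)*(9*t+7))) ?_ ?_ ?_ ?_ ?_
          · apply div_nonneg (by linarith) (by linarith)
          · apply div_nonneg (by linarith) (by linarith)
          · apply div_nonneg (by linarith) (by positivity)
          · field_simp
            ring
          · refine Prod.ext ?_ ?_ <;>
              simp only [Prod.fst_add, Prod.snd_add, Prod.smul_fst, Prod.smul_snd,
                smul_eq_mul] <;> field_simp <;> ring
    · apply convexHull_min
      · intro w hw
        rw [hvs] at hw
        simp only [Finset.coe_insert, Set.mem_insert_iff, Finset.coe_singleton,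
          Set.mem_singleton_iff] at hw
        rw [hS]
        rcases hw with rfl | rfl | rfl | rfl | rfl <;>
          refine ⟨?_, ?_, ?_, ?_, ?_⟩ <;> simp <;> nlinarith [ht, sq_nonneg t]
      · rw [hS]
        intro q hq r hr a b ha hb hab
        simp only [Set.mem_setOf_eq, Prod.fst_add, Prod.snd_add, Prod.smul_fst,
          Prod.smul_snd, smul_eq_mul] at *
        obtain ⟨q1, q2, q3, q4, q5⟩ := hq
        obtain ⟨r1, r2, r3, r4, r5⟩ := hr
        have e1 := mul_le_mul_of_nonneg_left q1 ha
        have e2 := mul_le_mul_of_nonneg_left r1 hb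
        have e3 := mul_le_mul_of_nonneg_left q2 ha
        have e4 := mul_le_mul_of_nonneg_left r2 hb
        have e5 := mul_le_mul_of_nonneg_left q3 ha
        have e6 := mul_le_mul_of_nonneg_left r3 hb
        have e7 := mul_le_mul_of_nonneg_left q4 ha
        have e8 := mul_le_mul_of_nonneg_left r4 hb
        have e9 := mul_le_mul_of_nonneg_left q5 ha
        have e10 := mul_le_mul_of_nonneg_left r5 hb
        have k1 : a * t + b * t = t := by rw [← add_mul, hab, one_mul]
        have k2 : a * (19*t+16) + b * (19*t+16) = 19*t+16 := by
          rw [← add_mul, hab, one_mul]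
        have k3 : a * (9*t+7) + b * (9*t+7) = 9*t+7 := by rw [← add_mul, hab, one_mul]
        have k4 : a * (4*t^2) + b * (4*t^2) = 4*t^2 := by rw [← add_mul, hab, one_mul]
        refine ⟨by linarith, by linarith, by linarith, by linarith, by linarith⟩
  · -- card
    have n1 : ((t, t) : ℝ × ℝ) ≠ (4*t+4, 4*t+4) := by
      intro h; have := congrArg Prod.fst h; simp at this; linarith
    have n2 : ((t, t) : ℝ × ℝ) ≠ (16*t+19, 19*t+16) := by
      intro h; have := congrArg Prod.fst h; simp at this; linarith
    have n3 : ((t, t) : ℝ × ℝ) ≠ (10*t+9, 19*t+16) := by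
      intro h; have := congrArg Prod.fst h; simp at this; linarith
    have n4 : ((t, t) : ℝ × ℝ) ≠ (t, 10*t+7) := by
      intro h; have := congrArg Prod.snd h; simp at this; linarith
    have n5 : ((4*t+4, 4*t+4) : ℝ × ℝ) ≠ (16*t+19, 19*t+16) := by
      intro h; have := congrArg Prod.fst h; simp at this; linarith
    have n6 : ((4*t+4, 4*t+4) : ℝ × ℝ) ≠ (10*t+9, 19*t+16) := by
      intro h; have := congrArg Prod.fst h; simp at this; linarith
    have n7 : ((4*t+4, 4*t+4) : ℝ × ℝ) ≠ (t, 10*t+7) := by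
      intro h; have := congrArg Prod.fst h; simp at this; linarith
    have n8 : ((16*t+19, 19*t+16) : ℝ × ℝ) ≠ (10*t+9, 19*t+16) := by
      intro h; have := congrArg Prod.fst h; simp at this; linarith
    have n9 : ((16*t+19, 19*t+16) : ℝ × ℝ) ≠ (t, 10*t+7) := by
      intro h; have := congrArg Prod.fst h; simp at this; linarith
    have n10 : ((10*t+9, 19*t+16) : ℝ × ℝ) ≠ (t, 10*t+7) := by
      intro h; have := congrArg Prod.fst h; simp at this; linarith
    rw [hvs]
    rw [Finset.card_insert_of_notMem (by
        simp only [Finset.mem_insert, Finset.mem_singleton]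
        push_neg
        exact ⟨n1, n2, n3, n4⟩),
      Finset.card_insert_of_notMem (by
        simp only [Finset.mem_insert, Finset.mem_singleton]
        push_neg
        exact ⟨n5, n6, n7⟩),
      Finset.card_insert_of_notMem (by
        simp only [Finset.mem_insert, Finset.mem_singleton]
        push_neg
        exact ⟨n8, n9⟩),
      Finset.card_insert_of_notMem (by
        simp only [Finset.mem_singleton]
        exact n10),
      Finset.card_singleton]
  · -- vertices are extreme
    intro v hv hcon
    have key : ∀ aa bb cc : ℝ, (∀ w ∈ vs.erase v, aa * w.1 + bb * w.2 ≤ cc) →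
        aa * v.1 + bb * v.2 ≤ cc := by
      intro aa bb cc hw
      have hsub : convexHull ℝ ((vs.erase v : Finset (ℝ × ℝ)) : Set (ℝ × ℝ)) ⊆
          {p : ℝ × ℝ | aa * p.1 + bb * p.2 ≤ cc} :=
        convexHull_min (fun w hw' => hw w (Finset.mem_coe.mp hw')) (halfspace_convex aa bb cc)
      exact hsub hcon
    rw [hvs] at hv
    simp only [Finset.mem_insert, Finset.mem_singleton] at hv
    rcases hv with rfl | rfl | rfl | rfl | rfl
    · have h := key (-1) (-1) (-4*t) (by
        intro w hw
        have hne := Finset.ne_of_mem_erase hw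
        have hw' := Finset.mem_of_mem_erase hw
        rw [hvs] at hw'
        simp only [Finset.mem_insert, Finset.mem_singleton] at hw'
        rcases hw' with rfl | rfl | rfl | rfl | rfl
        · exact absurd rfl hne
        all_goals simp; nlinarith [ht])
      simp only at h
      nlinarith [ht]
    · have h := key (5*t+5) (-(4*t+6)) (4*t^2-3*t-1) (by
        intro w hw
        have hne := Finset.ne_of_mem_erase hw
        have hw' := Finset.mem_of_mem_erase hw
        rw [hvs] at hw'
        simp only [Finset.mem_insert, Finset.mem_singleton] at hw'
        rcases hw' with rfl | rfl | rfl | rfl | rfl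
        · simp; nlinarith [ht]
        · exact absurd rfl hne
        all_goals simp; nlinarith [ht])
      simp only at h
      nlinarith [ht]
    · have h := key (5*t+4) (-(4*t+4)) (4*t^2+10*t+12) (by
        intro w hw
        have hne := Finset.ne_of_mem_erase hw
        have hw' := Finset.mem_of_mem_erase hw
        rw [hvs] at hw'
        simp only [Finset.mem_insert, Finset.mem_singleton] at hw'
        rcases hw' with rfl | rfl | rfl | rfl | rfl
        · simp; nlinarith [ht]
        · simp; nlinarith [ht]
        · exact absurd rfl hne
        all_goals simp; nlinarith [ht])
      simp only at h
      nlinarith [ht]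
    · have h := key (-1) 2 (25*t+18) (by
        intro w hw
        have hne := Finset.ne_of_mem_erase hw
        have hw' := Finset.mem_of_mem_erase hw
        rw [hvs] at hw'
        simp only [Finset.mem_insert, Finset.mem_singleton] at hw'
        rcases hw' with rfl | rfl | rfl | rfl | rfl
        · simp; nlinarith [ht]
        · simp; nlinarith [ht]
        · simp; nlinarith [ht]
        · exact absurd rfl hne
        · simp; nlinarith [ht])
      simp only at h
      nlinarith [ht]
    · have h := key (-2) 1 0 (by
        intro w hw
        have hne := Finset.ne_of_mem_erase hw
        have hw' := Finset.mem_of_mem_erase hw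
        rw [hvs] at hw'
        simp only [Finset.mem_insert, Finset.mem_singleton] at hw'
        rcases hw' with rfl | rfl | rfl | rfl | rfl
        · simp; nlinarith [ht]
        · simp; nlinarith [ht]
        · simp; nlinarith [ht]
        · simp; nlinarith [ht]
        · exact absurd rfl hne)
      simp only at h
      nlinarith [ht]
end
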